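/- arXiv:1507.08743 — 12 statements merged into one kernel-verified Lean document; each statement's English description precedes it below -/
import Mathlib

section
/- Let a, b, c be real numbers with max(|a|,|b|) > 0 and |c| ≤ 2·| |a| − |b| |. Then the Mahler measure of P_{a,b,c} satisfies (1/(2π)²) ∫₀^{2π} ∫₀^{2π} log |2a cos θ₁ + 2b cos θ₂ + c| dθ₁ dθ₂ = log max(|a|, |b|). -/
open Real MeasureTheory intervalIntegral
open Set Function

lemma ii_log_sin_0_half : IntervalIntegrable (fun x => Real.log (Real.sin x)) volume 0 (π/2) := by
  have h2 : (0:ℝ) ≤ π/2 := by positivity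
  have hg : IntervalIntegrable (fun x : ℝ => Real.log (π/2) + 2 * x ^ (-(1/2:ℝ))) volume 0 (π/2) :=
    intervalIntegrable_const.add ((intervalIntegral.intervalIntegrable_rpow' (by norm_num)).const_mul 2)
  refine hg.mono_fun (Real.measurable_log.comp Real.measurable_sin).aestronglyMeasurable ?_
  rw [uIoc_of_le h2]
  filter_upwards [ae_restrict_mem measurableSet_Ioc] with x hx
  have hx0 : 0 < x := hx.1
  have hxp : x ≤ π/2 := hx.2
  have hsinpos : 0 < Real.sin x := Real.sin_pos_of_pos_of_lt_pi hx0 (lt_of_le_of_lt hxp (by linarith [Real.pi_pos]))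
  have hjordan : 2/π * x ≤ Real.sin x := Real.mul_le_sin hx0.le hxp
  have hsin1 : Real.sin x ≤ 1 := Real.sin_le_one x
  have hlog_le : Real.log (Real.sin x) ≤ 0 := Real.log_nonpos hsinpos.le hsin1
  have hr : (0:ℝ) < x ^ (-(1/2:ℝ)) := Real.rpow_pos_of_pos hx0 _
  have hneg : -Real.log x ≤ 2 * x ^ (-(1/2:ℝ)) := by
    have h1 : Real.log (x ^ (-(1/2:ℝ))) = -(1/2) * Real.log x := Real.log_rpow hx0 _
    have h2 : Real.log (x ^ (-(1/2:ℝ))) ≤ x ^ (-(1/2:ℝ)) := by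
      linarith [Real.log_le_sub_one_of_pos hr]
    nlinarith
  have hlow : Real.log (2/π) + Real.log x ≤ Real.log (Real.sin x) := by
    have := Real.log_le_log (by positivity) hjordan
    rwa [Real.log_mul (by positivity) hx0.ne'] at this
  have hpi2 : (0:ℝ) ≤ Real.log (π/2) := Real.log_nonneg (by linarith [Real.pi_gt_three])
  have hlogdiv : Real.log (2/π) = -Real.log (π/2) := by
    rw [show (2:ℝ)/π = (π/2)⁻¹ by field_simp, Real.log_inv]
  rw [Real.norm_eq_abs, Real.norm_eq_abs, abs_of_nonpos hlog_le,
    abs_of_nonneg (by positivity : (0:ℝ) ≤ Real.log (π/2) + 2 * x ^ (-(1/2:ℝ)))]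
  rw [hlogdiv] at hlow
  linarith

lemma ii_log_sin_half_pi : IntervalIntegrable (fun x => Real.log (Real.sin x)) volume (π/2) π := by
  have h := ii_log_sin_0_half.comp_sub_left π
  simp only [Real.sin_pi_sub] at h
  have e : π - π/2 = π/2 := by ring
  rw [e] at h
  simpa using h.symm

lemma ii_log_sin_0_pi : IntervalIntegrable (fun x => Real.log (Real.sin x)) volume 0 π :=
  ii_log_sin_0_half.trans ii_log_sin_half_pi

lemma periodic_ii {f : ℝ → ℝ} {T : ℝ} (hper : Function.Periodic f T) (hT : 0 < T)
    (h0 : IntervalIntegrable f volume 0 T) (a b : ℝ) : IntervalIntegrable f volume a b := by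
  have hstep : ∀ u v : ℝ, IntervalIntegrable f volume u v →
      IntervalIntegrable f volume (u + T) (v + T) := by
    intro u v h
    have h1 := h.comp_add_right (-T)
    have h2 : (fun x => f (x + -T)) = f := by
      funext x
      have := hper (x - T)
      simpa [sub_add_cancel, ← sub_eq_add_neg] using this.symm
    rw [h2] at h1
    simpa [sub_neg_eq_add] using h1
  have hstep' : ∀ u v : ℝ, IntervalIntegrable f volume u v →
      IntervalIntegrable f volume (u - T) (v - T) := by
    intro u v h
    have h1 := h.comp_add_right T
    have h2 : (fun x => f (x + T)) = f := funext fun x => hper x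
    rw [h2] at h1
    exact h1
  have hkR : ∀ n : ℕ, IntervalIntegrable f volume (n * T) (n * T + T) := by
    intro n
    induction n with
    | zero => simpa using h0
    | succ n ih =>
      have := hstep _ _ ih
      have e1 : (n:ℝ) * T + T = ((n:ℕ)+1 : ℕ) * T := by push_cast; ring
      rwa [e1] at this
  have hkL : ∀ n : ℕ, IntervalIntegrable f volume (-((n:ℝ) * T) - T) (-((n:ℝ) * T)) := by
    intro n
    induction n with
    | zero => simpa using hstep' _ _ h0
    | succ n ih =>
      have := hstep' _ _ ih
      have e2 : -((n:ℝ) * T) - T = -((((n:ℕ)+1:ℕ)) * T) := by push_cast; ring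
      rwa [e2] at this
  have hn : ∀ n : ℕ, IntervalIntegrable f volume (-((n:ℝ) * T)) ((n:ℝ) * T) := by
    intro n
    induction n with
    | zero => simpa using (IntervalIntegrable.refl : IntervalIntegrable f volume 0 0)
    | succ n ih =>
      have hl := hkL n
      have hr := hkR n
      have h1 : IntervalIntegrable f volume (-((n:ℝ) * T) - T) ((n:ℝ) * T + T) :=
        (hl.trans ih).trans hr
      have e1 : -((n:ℝ) * T) - T = -((((n:ℕ)+1:ℕ)) * T) := by push_cast; ring
      have e2 : (n:ℝ) * T + T = (((n:ℕ)+1:ℕ)) * T := by push_cast; ring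
      rwa [e1, e2] at h1
  obtain ⟨n, hnn⟩ := exists_nat_ge (max |a| |b| / T)
  have hbound : max |a| |b| ≤ n * T := by
    rw [div_le_iff₀ hT] at hnn
    linarith
  refine (hn n).mono_set ?_
  have hsub : ∀ x : ℝ, |x| ≤ max |a| |b| → x ∈ Set.uIcc (-((n:ℝ)*T)) ((n:ℝ)*T) := by
    intro x hx
    rw [Set.uIcc_of_le (by nlinarith [abs_nonneg a, le_max_left |a| |b|] : -((n:ℝ)*T) ≤ (n:ℝ)*T)]
    constructor
    · linarith [neg_abs_le x]
    · linarith [le_abs_self x]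
  exact Set.uIcc_subset_uIcc (hsub a (le_max_left _ _)) (hsub b (le_max_right _ _))

lemma per_log_sin : Function.Periodic (fun x => Real.log (Real.sin x)) π := by
  intro x; simp [Real.sin_add_pi, Real.log_neg_eq_log]

lemma ii_log_sin (a b : ℝ) : IntervalIntegrable (fun x => Real.log (Real.sin x)) volume a b :=
  periodic_ii per_log_sin Real.pi_pos ii_log_sin_0_pi a b

lemma ii_log_cos (a b : ℝ) : IntervalIntegrable (fun x => Real.log (Real.cos x)) volume a b := by
  have h := (ii_log_sin (π/2 - a) (π/2 - b)).comp_sub_left (π/2)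
  simp only [Real.sin_pi_div_two_sub] at h
  simpa [sub_sub_cancel] using h

lemma per_log_cos : Function.Periodic (fun x => Real.log (Real.cos x)) π := by
  intro x; simp [Real.cos_add_pi, Real.log_neg_eq_log]

lemma ii_log_cos_half (c a b : ℝ) :
    IntervalIntegrable (fun θ => Real.log (Real.cos (θ/2 + c))) volume a b := by
  have h1 := (ii_log_cos (a/2 + c) (b/2 + c)).comp_add_right c
  have e1 : a/2 + c - c = a/2 := by ring
  have e2 : b/2 + c - c = b/2 := by ring
  rw [e1, e2] at h1
  have h2 := h1.comp_mul_right (c := 2⁻¹)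
  have e3 : a/2/2⁻¹ = a := by field_simp
  have e4 : b/2/2⁻¹ = b := by field_simp
  rw [e3, e4] at h2
  have : (fun x : ℝ => Real.log (Real.cos (x * 2⁻¹ + c))) = fun θ : ℝ => Real.log (Real.cos (θ/2 + c)) := by
    funext x; norm_num [div_eq_mul_inv]
  rwa [this] at h2

lemma countable_sin_zero : {x : ℝ | Real.sin x = 0}.Countable := by
  have h : {x : ℝ | Real.sin x = 0} ⊆ Set.range (fun n : ℤ => (n:ℝ) * π) := by
    intro x hx
    rcases Real.sin_eq_zero_iff.1 hx with ⟨n, hn⟩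
    exact ⟨n, hn⟩
  exact (Set.countable_range _).mono h

lemma countable_cos_zero : {x : ℝ | Real.cos x = 0}.Countable := by
  have h : {x : ℝ | Real.cos x = 0} ⊆ Set.range (fun n : ℤ => (2*(n:ℝ)+1) * π/2) := by
    intro x hx
    rcases Real.cos_eq_zero_iff.1 hx with ⟨n, hn⟩
    exact ⟨n, by push_cast; linarith⟩
  exact (Set.countable_range _).mono h

lemma ae_sin_cos_ne : ∀ᵐ x : ℝ, Real.sin x ≠ 0 ∧ Real.cos x ≠ 0 := by
  have h := (countable_sin_zero.union countable_cos_zero).ae_notMem volume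
  filter_upwards [h] with x hx
  exact ⟨fun h1 => hx (Or.inl h1), fun h2 => hx (Or.inr h2)⟩

lemma ae_cos_half_ne (c : ℝ) : ∀ᵐ θ : ℝ, Real.cos (θ/2 + c) ≠ 0 := by
  have hcnt : {θ : ℝ | Real.cos (θ/2 + c) = 0}.Countable := by
    have h : {θ : ℝ | Real.cos (θ/2 + c) = 0} ⊆
        Set.range (fun n : ℤ => 2*((2*(n:ℝ)+1) * π/2 - c)) := by
      intro θ hθ
      rcases Real.cos_eq_zero_iff.1 hθ with ⟨n, hn⟩
      refine ⟨n, ?_⟩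
      have : θ/2 + c = (2*(n:ℝ)+1) * π/2 := by push_cast at hn ⊢; linarith
      linarith
    exact (Set.countable_range _).mono h
  filter_upwards [hcnt.ae_notMem volume] with θ hθ
  exact hθ

lemma int_log_cos_pi : ∫ x in (0:ℝ)..π, Real.log (Real.cos x) = -(π * Real.log 2) := by
  set A := ∫ x in (0:ℝ)..π, Real.log (Real.sin x) with hA
  set B := ∫ x in (0:ℝ)..π, Real.log (Real.cos x) with hB
  have hs2 : ∫ x in π..(π+π), Real.log (Real.sin x) = A :=
    by simpa using per_log_sin.intervalIntegral_add_eq π 0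
  have hAB : B = A := by
    have h1 : B = ∫ x in (0:ℝ)..π, Real.log (Real.sin (x + π/2)) := by
      rw [hB]
      apply intervalIntegral.integral_congr
      intro x _
      simp [Real.sin_add_pi_div_two]
    have h2 := intervalIntegral.integral_comp_add_right
      (fun x => Real.log (Real.sin x)) (π/2) (a := 0) (b := π)
    have h3 : ∫ x in (π/2:ℝ)..(π/2+π), Real.log (Real.sin x) = A := by
      simpa using per_log_sin.intervalIntegral_add_eq (π/2) 0
    rw [h1, h2]
    rw [show (0:ℝ)+π/2 = π/2 by ring, show π+π/2 = π/2+π by ring]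
    exact h3
  have hdouble : ∫ x in (0:ℝ)..π, Real.log (Real.sin (2*x)) = A := by
    have h := intervalIntegral.integral_comp_mul_left
      (fun x => Real.log (Real.sin x)) (a := 0) (b := π) (c := 2) two_ne_zero
    rw [h]
    have hsplit : ∫ x in (2*0:ℝ)..(2*π), Real.log (Real.sin x) = A + A := by
      rw [show (2*0:ℝ) = 0 by ring]
      rw [← intervalIntegral.integral_add_adjacent_intervals
        (ii_log_sin 0 π) (ii_log_sin π (2*π))]
      have hps : ∫ x in π..(2*π), Real.log (Real.sin x) = A := by
        rw [show (2*π:ℝ) = π+π by ring]; exact hs2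
      rw [hps]
    rw [hsplit]
    simp only [smul_eq_mul]
    ring
  have hsum : ∫ x in (0:ℝ)..π, Real.log (Real.sin (2*x))
      = ∫ x in (0:ℝ)..π, (Real.log 2 + Real.log (Real.sin x) + Real.log (Real.cos x)) := by
    apply intervalIntegral.integral_congr_ae
    filter_upwards [ae_sin_cos_ne] with x hx _
    rw [Real.sin_two_mul]
    rw [Real.log_mul (mul_ne_zero two_ne_zero hx.1) hx.2,
        Real.log_mul two_ne_zero hx.1]
  have hrhs : ∫ x in (0:ℝ)..π, (Real.log 2 + Real.log (Real.sin x) + Real.log (Real.cos x))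
      = π * Real.log 2 + A + B := by
    rw [intervalIntegral.integral_add (intervalIntegrable_const.add (ii_log_sin 0 π)) (ii_log_cos 0 π),
        intervalIntegral.integral_add intervalIntegrable_const (ii_log_sin 0 π)]
    simp only [intervalIntegral.integral_const, smul_eq_mul, sub_zero, ← hA, ← hB]
  have hkey : A = π * Real.log 2 + A + B := hdouble.symm.trans (hsum.trans hrhs)
  linarith [hAB, hkey]

lemma int_log_cos_half_val (c : ℝ) :
    ∫ θ in (0:ℝ)..(2*π), Real.log (Real.cos (θ/2 + c)) = -(2*π*Real.log 2) := by
  have h1 := intervalIntegral.integral_comp_div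
    (fun y => Real.log (Real.cos (y + c))) (a := 0) (b := 2*π) (c := 2) two_ne_zero
  have e0 : (0:ℝ)/2 = 0 := by norm_num
  have e1 : (2*π)/2 = π := by ring
  rw [e0, e1] at h1
  have h2 := intervalIntegral.integral_comp_add_right
    (fun x => Real.log (Real.cos x)) c (a := 0) (b := π)
  have h3 : ∫ x in (c:ℝ)..(c+π), Real.log (Real.cos x) = -(π * Real.log 2) := by
    rw [per_log_cos.intervalIntegral_add_eq c 0]
    simpa using int_log_cos_pi
  rw [h1, h2, show (0:ℝ)+c = c by ring, show π+c = c+π by ring, h3]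
  simp only [smul_eq_mul]
  ring

lemma core_int (a t : ℝ) (ha : a ≠ 0) (ht : |t| ≤ 2*|a|) :
    ∫ θ in (0:ℝ)..(2*π), Real.log (2*a*Real.cos θ + t) = 2*π*Real.log |a| := by
  have h2a : (0:ℝ) < 2*|a| := by positivity
  have habs : |t/(2*a)| ≤ 1 := by
    rw [abs_div, abs_mul, abs_two, div_le_one (by positivity)]
    exact ht
  have hrange := abs_le.1 habs
  set φ := Real.arccos (t/(2*a)) with hφdef
  have hφ : Real.cos φ = t/(2*a) := Real.cos_arccos hrange.1 hrange.2
  have hkey : ∀ᵐ θ : ℝ, Real.log (2*a*Real.cos θ + t) =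
      Real.log (4*a) + Real.log (Real.cos (θ/2 + φ/2)) + Real.log (Real.cos (θ/2 + -(φ/2))) := by
    filter_upwards [ae_cos_half_ne (φ/2), ae_cos_half_ne (-(φ/2))] with θ h1 h2
    have e : 2*a*Real.cos θ + t = 4*a * Real.cos (θ/2 + φ/2) * Real.cos (θ/2 + -(φ/2)) := by
      have hc := Real.cos_add_cos θ φ
      have et : t = 2*a*Real.cos φ := by rw [hφ]; field_simp
      rw [et, show 2*a*Real.cos θ + 2*a*Real.cos φ = 2*a*(Real.cos θ + Real.cos φ) by ring, hc,
        show (θ+φ)/2 = θ/2 + φ/2 by ring, show (θ-φ)/2 = θ/2 + -(φ/2) by ring]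
      ring
    rw [e, Real.log_mul (mul_ne_zero (mul_ne_zero (by norm_num) ha) h1) h2,
      Real.log_mul (mul_ne_zero (by norm_num) ha) h1]
  rw [intervalIntegral.integral_congr_ae (hkey.mono fun θ h _ => h)]
  rw [intervalIntegral.integral_add
      (intervalIntegrable_const.add (ii_log_cos_half (φ/2) 0 (2*π)))
      (ii_log_cos_half (-(φ/2)) 0 (2*π)),
    intervalIntegral.integral_add intervalIntegrable_const (ii_log_cos_half (φ/2) 0 (2*π)),
    int_log_cos_half_val (φ/2), int_log_cos_half_val (-(φ/2)), intervalIntegral.integral_const]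
  have h4 : Real.log (4*a) = 2*Real.log 2 + Real.log |a| := by
    rw [← Real.log_abs (4*a), abs_mul, show |(4:ℝ)| = (2:ℝ)^2 by norm_num,
      Real.log_mul (by norm_num) (abs_ne_zero.2 ha), Real.log_pow]
    push_cast; ring
  rw [h4]
  simp only [smul_eq_mul]
  ring

lemma ae_factor (b t : ℝ) (hb : b ≠ 0) (ht : |t| ≤ 2*|b|) :
    ∀ᵐ θ : ℝ, Real.log (2*b*Real.cos θ + t) =
      Real.log (4*b) + Real.log (Real.cos (θ/2 + Real.arccos (t/(2*b))/2))
        + Real.log (Real.cos (θ/2 + -(Real.arccos (t/(2*b))/2))) := by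
  have habs : |t/(2*b)| ≤ 1 := by
    rw [abs_div, abs_mul, abs_two, div_le_one (by positivity)]
    exact ht
  have hrange := abs_le.1 habs
  set φ := Real.arccos (t/(2*b)) with hφdef
  have hφ : Real.cos φ = t/(2*b) := Real.cos_arccos hrange.1 hrange.2
  filter_upwards [ae_cos_half_ne (φ/2), ae_cos_half_ne (-(φ/2))] with θ h1 h2
  have e : 2*b*Real.cos θ + t = 4*b * Real.cos (θ/2 + φ/2) * Real.cos (θ/2 + -(φ/2)) := by
    have hc := Real.cos_add_cos θ φ
    have et : t = 2*b*Real.cos φ := by rw [hφ]; field_simp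
    rw [et, show 2*b*Real.cos θ + 2*b*Real.cos φ = 2*b*(Real.cos θ + Real.cos φ) by ring, hc,
      show (θ+φ)/2 = θ/2 + φ/2 by ring, show (θ-φ)/2 = θ/2 + -(φ/2) by ring]
    ring
  rw [e, Real.log_mul (mul_ne_zero (mul_ne_zero (by norm_num) hb) h1) h2,
    Real.log_mul (mul_ne_zero (by norm_num) hb) h1]

lemma ii_main (b t : ℝ) :
    IntervalIntegrable (fun θ => Real.log (2*b*Real.cos θ + t)) volume 0 (2*π) := by
  rcases eq_or_ne b 0 with hb | hb
  · subst hb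
    have e : (fun θ : ℝ => Real.log (2*0*Real.cos θ + t)) = fun _ => Real.log t := by
      funext θ; norm_num
    rw [e]
    exact intervalIntegrable_const
  rcases le_or_gt |t| (2*|b|) with hle | hgt
  · have hG : IntervalIntegrable (fun θ => Real.log (4*b)
        + Real.log (Real.cos (θ/2 + Real.arccos (t/(2*b))/2))
        + Real.log (Real.cos (θ/2 + -(Real.arccos (t/(2*b))/2)))) volume 0 (2*π) :=
      (intervalIntegrable_const.add (ii_log_cos_half _ _ _)).add (ii_log_cos_half _ _ _)
    apply hG.congr_ae
    have h := ae_factor b t hb hle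
    exact ae_restrict_of_ae (h.mono fun θ hθ => hθ.symm)
  · apply ContinuousOn.intervalIntegrable
    apply ContinuousOn.log
    · exact ((continuous_const.mul Real.continuous_cos).add continuous_const).continuousOn
    · intro x _
      intro hzero
      have h1 : |2*b*Real.cos x| ≤ 2*|b| := by
        rw [abs_mul, abs_mul, abs_two]
        nlinarith [Real.abs_cos_le_one x, abs_nonneg b]
      have : t = -(2*b*Real.cos x) := by linarith [hzero]
      rw [this, abs_neg] at hgt
      linarith

lemma int_ge (b t : ℝ) (hb : b ≠ 0) :
    2*π*Real.log |b| ≤ ∫ θ in (0:ℝ)..(2*π), Real.log (2*b*Real.cos θ + t) := by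
  have h2π : (0:ℝ) ≤ 2*π := by positivity
  set τ := max (-(2*|b|)) (min t (2*|b|)) with hτ
  have hbpos : (0:ℝ) < |b| := abs_pos.2 hb
  have hτabs : |τ| ≤ 2*|b| := by
    rw [abs_le]
    constructor
    · exact le_max_left _ _
    · exact max_le (by linarith) (min_le_right _ _)
  rw [← core_int b τ hb hτabs]
  apply intervalIntegral.integral_mono_ae h2π (ii_main b τ) (ii_main b t)
  filter_upwards [countable_sin_zero.ae_notMem volume] with θ hθ
  have hsin : Real.sin θ ≠ 0 := hθ
  have hcos2 : Real.cos θ^2 < 1 := by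
    nlinarith [Real.sin_sq_add_cos_sq θ, sq_pos_of_ne_zero hsin]
  have hcoslt : |2*b*Real.cos θ| < 2*|b| := by
    rw [abs_mul, abs_mul, abs_two]
    have h1 : |Real.cos θ| < 1 := by
      rw [← Real.sqrt_one, ← Real.sqrt_sq_eq_abs]
      exact Real.sqrt_lt_sqrt (sq_nonneg _) (by linarith)
    nlinarith
  have hc := abs_lt.1 hcoslt
  rcases le_or_gt t (2*|b|) with h1 | h1
  · rcases le_or_gt (-(2*|b|)) t with h2 | h2
    · have : τ = t := by rw [hτ, min_eq_left h1, max_eq_right h2]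
      rw [this]
    · -- t < -(2|b|) : τ = -(2|b|)
      have hτval : τ = -(2*|b|) := by
        rw [hτ, min_eq_left (by linarith), max_eq_left (by linarith)]
      rw [hτval]
      have hXτ : 2*b*Real.cos θ + -(2*|b|) < 0 := by linarith
      have hXt : 2*b*Real.cos θ + t < 2*b*Real.cos θ + -(2*|b|) := by linarith
      rw [← Real.log_neg_eq_log (2*b*Real.cos θ + -(2*|b|)),
        ← Real.log_neg_eq_log (2*b*Real.cos θ + t)]
      exact Real.log_le_log (by linarith) (by linarith)
  · -- t > 2|b| : τ = 2|b|
    have hτval : τ = 2*|b| := by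
      rw [hτ, min_eq_right (by linarith), max_eq_right (by linarith)]
    rw [hτval]
    have hXτ : 0 < 2*b*Real.cos θ + 2*|b| := by linarith
    exact Real.log_le_log hXτ (by linarith)

lemma norm_int_le (b t M : ℝ) (hb : b ≠ 0) (htM : |t| ≤ M) :
    ∫ θ in Set.Ioc (0:ℝ) (2*π), ‖Real.log (2*b*Real.cos θ + t)‖
      ≤ 4*π*Real.log (2*|b| + M + 1) - 2*π*Real.log |b| := by
  have h2π : (0:ℝ) ≤ 2*π := by positivity
  have hint : IntegrableOn (fun θ => Real.log (2*b*Real.cos θ + t)) (Set.Ioc 0 (2*π)) volume :=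
    (intervalIntegrable_iff_integrableOn_Ioc_of_le h2π).1 (ii_main b t)
  have hM0 : (0:ℝ) ≤ M := le_trans (abs_nonneg t) htM
  have hL0 : (0:ℝ) ≤ Real.log (2*|b| + M + 1) :=
    Real.log_nonneg (by nlinarith [abs_nonneg b])
  have hup : ∀ θ : ℝ, max (Real.log (2*b*Real.cos θ + t)) 0 ≤ Real.log (2*|b| + M + 1) := by
    intro θ
    apply max_le _ hL0
    rcases eq_or_ne (2*b*Real.cos θ + t) 0 with h | h
    · rw [h, Real.log_zero]; exact hL0
    · rw [← Real.log_abs]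
      apply Real.log_le_log (abs_pos.2 h)
      calc |2*b*Real.cos θ + t| ≤ |2*b*Real.cos θ| + |t| := abs_add_le _ _
        _ ≤ 2*|b| + M + 1 := by
            rw [abs_mul, abs_mul, abs_two]
            nlinarith [Real.abs_cos_le_one θ, abs_nonneg b]
  have habs : ∀ θ : ℝ, ‖Real.log (2*b*Real.cos θ + t)‖
      = 2 * max (Real.log (2*b*Real.cos θ + t)) 0 - Real.log (2*b*Real.cos θ + t) := by
    intro θ
    rw [Real.norm_eq_abs]
    rcases le_total (Real.log (2*b*Real.cos θ + t)) 0 with h | h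
    · rw [abs_of_nonpos h, max_eq_right h]; ring
    · rw [abs_of_nonneg h, max_eq_left h]; ring
  have hposint : IntegrableOn (fun θ => max (Real.log (2*b*Real.cos θ + t)) 0)
      (Set.Ioc 0 (2*π)) volume := hint.pos_part
  have hconst : IntegrableOn (fun _ : ℝ => Real.log (2*|b| + M + 1)) (Set.Ioc 0 (2*π)) volume :=
    integrableOn_const (by rw [Real.volume_Ioc]; exact ENNReal.ofReal_ne_top)
  have step1 : ∫ θ in Set.Ioc (0:ℝ) (2*π), ‖Real.log (2*b*Real.cos θ + t)‖
      = 2 * (∫ θ in Set.Ioc (0:ℝ) (2*π), max (Real.log (2*b*Real.cos θ + t)) 0)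
        - ∫ θ in Set.Ioc (0:ℝ) (2*π), Real.log (2*b*Real.cos θ + t) := by
    rw [← MeasureTheory.integral_const_mul, ← MeasureTheory.integral_sub (hposint.const_mul 2) hint]
    apply setIntegral_congr_fun measurableSet_Ioc
    intro θ _
    exact habs θ
  have step2 : (∫ θ in Set.Ioc (0:ℝ) (2*π), max (Real.log (2*b*Real.cos θ + t)) 0)
      ≤ 2*π*Real.log (2*|b| + M + 1) := by
    have := setIntegral_mono_on hposint hconst measurableSet_Ioc (fun θ _ => hup θ)
    rw [setIntegral_const, measureReal_def, Real.volume_Ioc, smul_eq_mul] at this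
    simp only [sub_zero, ENNReal.toReal_ofReal h2π] at this
    linarith [this]
  have step3 : 2*π*Real.log |b| ≤ ∫ θ in Set.Ioc (0:ℝ) (2*π), Real.log (2*b*Real.cos θ + t) := by
    rw [← intervalIntegral.integral_of_le h2π]
    exact int_ge b t hb
  rw [step1]
  linarith

/-- Theorem 1 (`th-log`): if `a, b, c` are real, not both of `a, b` vanish, and
`|c| ≤ 2 * abs (|a| - |b|)`, then the Mahler measure of
`P_{a,b,c}(x,y) = a(x + 1/x) + b(y + 1/y) + c` equals `log max(|a|, |b|)`. -/
theorem mahler_measure_Pabc_eq_log_max (a b c : ℝ)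
    (hab : 0 < max |a| |b|) (hc : |c| ≤ 2 * abs (|a| - |b|)) :
    (1 / (2 * π) ^ 2) *
      ∫ θ₁ in (0:ℝ)..(2 * π), ∫ θ₂ in (0:ℝ)..(2 * π),
        Real.log |2 * a * Real.cos θ₁ + 2 * b * Real.cos θ₂ + c| =
      Real.log (max |a| |b|) := by
  have hπ := Real.pi_pos
  have hπ' : (π:ℝ) ≠ 0 := Real.pi_ne_zero
  have h2π : (0:ℝ) ≤ 2*π := by positivity
  simp only [Real.log_abs]
  rcases le_or_gt |a| |b| with hba | hab'
  · -- case |a| ≤ |b|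
    have hbne : b ≠ 0 := by
      intro h
      rw [h] at hba
      simp only [abs_zero] at hba
      have ha0 : |a| = 0 := le_antisymm hba (abs_nonneg a)
      rw [h] at hab
      simp [ha0] at hab
    have hmax : max |a| |b| = |b| := max_eq_right hba
    have hcc : |c| ≤ 2*(|b| - |a|) := by
      rw [abs_of_nonpos (by linarith : |a| - |b| ≤ 0)] at hc
      linarith
    have hinner : ∀ θ₁ : ℝ,
        (∫ θ₂ in (0:ℝ)..(2*π), Real.log (2*a*Real.cos θ₁ + 2*b*Real.cos θ₂ + c))
          = 2*π*Real.log |b| := by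
      intro θ₁
      rw [show (fun θ₂ => Real.log (2*a*Real.cos θ₁ + 2*b*Real.cos θ₂ + c))
          = fun θ₂ => Real.log (2*b*Real.cos θ₂ + (2*a*Real.cos θ₁ + c)) from
        funext fun θ₂ => by rw [show 2*a*Real.cos θ₁ + 2*b*Real.cos θ₂ + c
          = 2*b*Real.cos θ₂ + (2*a*Real.cos θ₁ + c) by ring]]
      apply core_int b _ hbne
      calc |2*a*Real.cos θ₁ + c| ≤ |2*a*Real.cos θ₁| + |c| := abs_add_le _ _
        _ ≤ 2*|a| + 2*(|b| - |a|) := by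
            rw [abs_mul, abs_mul, abs_two]
            nlinarith [Real.abs_cos_le_one θ₁, abs_nonneg a]
        _ = 2*|b| := by ring
    rw [intervalIntegral.integral_congr (g := fun _ => 2*π*Real.log |b|)
      (fun θ₁ _ => hinner θ₁)]
    rw [intervalIntegral.integral_const, hmax, smul_eq_mul]
    field_simp
    ring
  · -- case |b| < |a|
    have hane : a ≠ 0 := by
      intro h
      rw [h] at hab'
      simp only [abs_zero] at hab'
      linarith [abs_nonneg b]
    have hmax : max |a| |b| = |a| := max_eq_left hab'.le
    have hcc : |c| ≤ 2*(|a| - |b|) := by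
      rw [abs_of_nonneg (by linarith : (0:ℝ) ≤ |a| - |b|)] at hc
      linarith
    rcases eq_or_ne b 0 with hb0 | hbne
    · subst hb0
      have hinner : ∀ θ₁ : ℝ,
          (∫ θ₂ in (0:ℝ)..(2*π), Real.log (2*a*Real.cos θ₁ + 2*0*Real.cos θ₂ + c))
            = (2*π) * Real.log (2*a*Real.cos θ₁ + c) := by
        intro θ₁
        rw [show (fun θ₂ => Real.log (2*a*Real.cos θ₁ + 2*0*Real.cos θ₂ + c))
            = fun _ : ℝ => Real.log (2*a*Real.cos θ₁ + c) from
          funext fun θ₂ => by norm_num]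
        rw [intervalIntegral.integral_const, smul_eq_mul]
        ring_nf
      rw [intervalIntegral.integral_congr
        (g := fun θ₁ => (2*π) * Real.log (2*a*Real.cos θ₁ + c)) (fun θ₁ _ => hinner θ₁)]
      rw [intervalIntegral.integral_const_mul]
      rw [show (fun θ₁ => Real.log (2*a*Real.cos θ₁ + c))
          = fun θ₁ => Real.log (2*a*Real.cos θ₁ + c) from rfl]
      rw [core_int a c hane (by simpa using hcc), hmax]
      field_simp
    · -- Fubini case
      set Q : Set ℝ := Set.Ioc 0 (2*π) with hQ
      have hQm : MeasurableSet Q := measurableSet_Ioc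
      have hFmeas : Measurable (fun p : ℝ × ℝ =>
          Real.log (2*a*Real.cos p.1 + 2*b*Real.cos p.2 + c)) := by
        apply Real.measurable_log.comp
        apply Continuous.measurable
        exact ((continuous_const.mul (Real.continuous_cos.comp continuous_fst)).add
          (continuous_const.mul (Real.continuous_cos.comp continuous_snd))).add continuous_const
      set M : ℝ := 2*|a| + |c| with hM
      have htM : ∀ θ₁ : ℝ, |2*a*Real.cos θ₁ + c| ≤ M := by
        intro θ₁
        calc |2*a*Real.cos θ₁ + c| ≤ |2*a*Real.cos θ₁| + |c| := abs_add_le _ _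
          _ ≤ M := by
              rw [hM, abs_mul, abs_mul, abs_two]
              nlinarith [Real.abs_cos_le_one θ₁, abs_nonneg a]
      have hslice : ∀ θ₁ : ℝ, IntegrableOn
          (fun θ₂ => Real.log (2*a*Real.cos θ₁ + 2*b*Real.cos θ₂ + c)) Q volume := by
        intro θ₁
        rw [show (fun θ₂ => Real.log (2*a*Real.cos θ₁ + 2*b*Real.cos θ₂ + c))
            = fun θ₂ => Real.log (2*b*Real.cos θ₂ + (2*a*Real.cos θ₁ + c)) from
          funext fun θ₂ => by rw [show 2*a*Real.cos θ₁ + 2*b*Real.cos θ₂ + c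
            = 2*b*Real.cos θ₂ + (2*a*Real.cos θ₁ + c) by ring]]
        exact (intervalIntegrable_iff_integrableOn_Ioc_of_le h2π).1 (ii_main b _)
      have hnormb : ∀ θ₁ : ℝ,
          (∫ θ₂ in Q, ‖Real.log (2*a*Real.cos θ₁ + 2*b*Real.cos θ₂ + c)‖)
            ≤ 4*π*Real.log (2*|b| + M + 1) - 2*π*Real.log |b| := by
        intro θ₁
        rw [show (fun θ₂ => ‖Real.log (2*a*Real.cos θ₁ + 2*b*Real.cos θ₂ + c)‖)
            = fun θ₂ => ‖Real.log (2*b*Real.cos θ₂ + (2*a*Real.cos θ₁ + c))‖ from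
          funext fun θ₂ => by rw [show 2*a*Real.cos θ₁ + 2*b*Real.cos θ₂ + c
            = 2*b*Real.cos θ₂ + (2*a*Real.cos θ₁ + c) by ring]]
        exact norm_int_le b _ M hbne (htM θ₁)
      have hInt : Integrable (fun p : ℝ × ℝ =>
          Real.log (2*a*Real.cos p.1 + 2*b*Real.cos p.2 + c))
          ((volume.restrict Q).prod (volume.restrict Q)) := by
        refine (integrable_prod_iff hFmeas.aestronglyMeasurable).2 ⟨?_, ?_⟩
        · exact Filter.Eventually.of_forall fun θ₁ => hslice θ₁
        · apply MeasureTheory.Integrable.mono'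
            (g := fun _ : ℝ => 4*π*Real.log (2*|b| + M + 1) - 2*π*Real.log |b|)
            (integrableOn_const (by rw [hQ, Real.volume_Ioc]; exact ENNReal.ofReal_ne_top))
            (hFmeas.norm.aestronglyMeasurable.integral_prod_right')
          refine Filter.Eventually.of_forall fun θ₁ => ?_
          rw [Real.norm_eq_abs, abs_of_nonneg (MeasureTheory.integral_nonneg fun θ₂ => norm_nonneg _)]
          exact hnormb θ₁
      have hswap := MeasureTheory.integral_integral_swap
        (f := fun θ₁ θ₂ => Real.log (2*a*Real.cos θ₁ + 2*b*Real.cos θ₂ + c))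
        (μ := volume.restrict Q) (ν := volume.restrict Q) hInt
      have hconv : (∫ θ₁ in (0:ℝ)..(2*π), ∫ θ₂ in (0:ℝ)..(2*π),
          Real.log (2*a*Real.cos θ₁ + 2*b*Real.cos θ₂ + c))
          = ∫ θ₁ in Q, ∫ θ₂ in Q, Real.log (2*a*Real.cos θ₁ + 2*b*Real.cos θ₂ + c) := by
        rw [intervalIntegral.integral_of_le h2π]
        apply setIntegral_congr_fun hQm
        intro θ₁ _
        exact intervalIntegral.integral_of_le h2π
      have hinner2 : ∀ θ₂ : ℝ,
          (∫ θ₁ in Q, Real.log (2*a*Real.cos θ₁ + 2*b*Real.cos θ₂ + c))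
            = 2*π*Real.log |a| := by
        intro θ₂
        rw [show (fun θ₁ => Real.log (2*a*Real.cos θ₁ + 2*b*Real.cos θ₂ + c))
            = fun θ₁ => Real.log (2*a*Real.cos θ₁ + (2*b*Real.cos θ₂ + c)) from
          funext fun θ₁ => by rw [show 2*a*Real.cos θ₁ + 2*b*Real.cos θ₂ + c
            = 2*a*Real.cos θ₁ + (2*b*Real.cos θ₂ + c) by ring]]
        rw [hQ, ← intervalIntegral.integral_of_le h2π]
        apply core_int a _ hane
        calc |2*b*Real.cos θ₂ + c| ≤ |2*b*Real.cos θ₂| + |c| := abs_add_le _ _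
          _ ≤ 2*|b| + 2*(|a| - |b|) := by
              rw [abs_mul, abs_mul, abs_two]
              nlinarith [Real.abs_cos_le_one θ₂, abs_nonneg b]
          _ = 2*|a| := by ring
      have hval : (∫ θ₂ in Q, ∫ θ₁ in Q,
          Real.log (2*a*Real.cos θ₁ + 2*b*Real.cos θ₂ + c))
            = (2*π) * (2*π*Real.log |a|) := by
        rw [setIntegral_congr_fun hQm (fun θ₂ _ => hinner2 θ₂)]
        rw [setIntegral_const, hQ, measureReal_def, Real.volume_Ioc, smul_eq_mul, sub_zero,
          ENNReal.toReal_ofReal h2π]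
      rw [hconv, hswap, hval, hmax]
      field_simp
end

section
/- Let r be a real number with |r| ≤ 2. Then ∫₀^{2π} log |e^{2iθ} + r·e^{iθ} + 1| dθ = 0; equivalently, ∫₀^{2π} log |2 cos θ + r| dθ = 0. -/
open Real Complex intervalIntegral

section JensenHelpers
open MeasureTheory Set

open Real MeasureTheory intervalIntegral Set

noncomputable def LL (x : ℝ) : ℝ := Real.log |2 * Real.sin x|

lemma LL_per : Function.Periodic LL π := by
  intro x; simp [LL, Real.sin_add_pi, abs_neg, mul_neg]

lemma LL_even (x : ℝ) : LL (-x) = LL x := by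
  simp [LL, Real.sin_neg, mul_neg, abs_neg]

lemma LL_refl (x : ℝ) : LL (π - x) = LL x := by
  simp [LL, Real.sin_pi_sub]

-- integrability of log on Ioc 0 1
lemma log_int : IntegrableOn Real.log (Ioc (0:ℝ) 1) volume := by
  have h : IntegrableOn (fun x => -Real.log x) (Ioc (0:ℝ) 1) volume := by
    apply integrableOn_deriv_of_nonneg (g := fun x => x - x * Real.log x)
    · exact (continuous_id.sub Real.continuous_mul_log).continuousOn
    · intro x hx
      exact ((hasDerivAt_id' x).sub (Real.hasDerivAt_mul_log (ne_of_gt hx.1))).congr_deriv (by ring)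
    · intro x hx
      simpa using Real.log_nonpos (le_of_lt hx.1) (le_of_lt hx.2)
  have h2 := h.neg
  exact h2.congr (Filter.Eventually.of_forall fun x => by simp)


lemma LL_meas : Measurable LL :=
  Real.measurable_log.comp ((Real.measurable_sin.const_mul 2).abs)

lemma LL_int01 : IntervalIntegrable LL volume 0 1 := by
  rw [intervalIntegrable_iff, uIoc_of_le zero_le_one]
  apply Integrable.mono' (g := fun x => Real.log 2 - Real.log x)
  · exact (integrableOn_const (C := Real.log 2) (by simp)).sub log_int
  · exact LL_meas.aestronglyMeasurable
  · filter_upwards [ae_restrict_mem measurableSet_Ioc] with x hx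
    obtain ⟨hx0, hx1⟩ := hx
    have hxpi : x ≤ π / 2 := hx1.trans (by linarith [Real.pi_gt_three])
    have hs1 : x ≤ 2 * Real.sin x := by
      have := Real.mul_le_sin hx0.le hxpi
      have hpi : 2 / π * x ≥ x / 2 := by
        have h1 : (2:ℝ) / π ≥ 1 / 2 := by
          rw [ge_iff_le, div_le_div_iff₀ two_pos Real.pi_pos]
          linarith [Real.pi_lt_d2]
        nlinarith [hx0.le]
      nlinarith
    have hs2 : 2 * Real.sin x ≤ 2 * x := by nlinarith [Real.sin_lt hx0]
    have hspos : 0 < 2 * Real.sin x := by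
      have := Real.sin_pos_of_pos_of_lt_pi hx0 (by linarith [Real.pi_gt_three])
      linarith
    have habs : |2 * Real.sin x| = 2 * Real.sin x := abs_of_pos hspos
    have hlow : Real.log x ≤ LL x := by
      rw [LL, habs]; exact Real.log_le_log hx0 hs1
    have hhigh : LL x ≤ Real.log 2 + Real.log x := by
      rw [LL, habs, ← Real.log_mul two_ne_zero (ne_of_gt hx0)]
      exact Real.log_le_log (by positivity) hs2
    have hlogx : Real.log x ≤ 0 := Real.log_nonpos hx0.le hx1
    rw [Real.norm_eq_abs, abs_le]
    have h02 : (0:ℝ) ≤ Real.log 2 := Real.log_nonneg one_le_two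
    constructor <;> linarith

lemma LL_shift (k : ℤ) {a b : ℝ} (h : IntervalIntegrable LL volume a b) :
    IntervalIntegrable LL volume (a + k * π) (b + k * π) := by
  have h2 := h.comp_sub_right ((k : ℝ) * π)
  have he : (fun x => LL (x - (k : ℝ) * π)) = LL :=
    funext fun x => (LL_per.int_mul k).sub_eq x
  rwa [he] at h2

lemma LL_cont {a b : ℝ} (h : ∀ x ∈ Set.uIcc a b, Real.sin x ≠ 0) :
    IntervalIntegrable LL volume a b := by
  apply ContinuousOn.intervalIntegrable
  apply ContinuousOn.log
  · exact (continuous_const.mul Real.continuous_sin).abs.continuousOn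
  · intro x hx
    simpa using h x hx

lemma LL_int_m11 : IntervalIntegrable LL volume (-1) 1 := by
  have h := LL_int01.comp_mul_left (c := -1)
  have he : (fun x => LL (-1 * x)) = LL := funext fun x => by
    rw [neg_one_mul, LL_even]
  rw [he] at h
  norm_num at h
  exact h.symm.trans LL_int01

lemma LL_int_base (k : ℤ) :
    IntervalIntegrable LL volume ((k : ℝ) * π) ((k : ℝ) * π + π) := by
  have hpi := Real.pi_gt_three
  have h1 : IntervalIntegrable LL volume (-1 + (k:ℝ) * π) (1 + (k:ℝ) * π) :=
    LL_shift k LL_int_m11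
  have h2 : IntervalIntegrable LL volume (1 + (k:ℝ) * π) ((π - 1) + (k:ℝ) * π) := by
    apply LL_shift k
    apply LL_cont
    intro x hx
    rw [Set.uIcc_of_le (by linarith)] at hx
    have h0 : 0 < x := by linarith [hx.1]
    have hlt : x < π := by linarith [hx.2]
    exact ne_of_gt (Real.sin_pos_of_pos_of_lt_pi h0 hlt)
  have h3 : IntervalIntegrable LL volume ((π - 1) + (k:ℝ) * π) (1 + ((k:ℝ)+1) * π) := by
    have := LL_shift (k + 1) LL_int_m11
    push_cast at this
    apply this.mono_set
    rw [Set.uIcc_of_le (by linarith), Set.uIcc_of_le (by linarith)]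
    apply Set.Icc_subset_Icc <;> linarith
  have hc : IntervalIntegrable LL volume (-1 + (k:ℝ) * π) (1 + ((k:ℝ)+1) * π) :=
    (h1.trans h2).trans h3
  apply hc.mono_set
  rw [Set.uIcc_of_le (by linarith), Set.uIcc_of_le (by linarith)]
  apply Set.Icc_subset_Icc <;> linarith

lemma LL_int_nat (n : ℕ) :
    IntervalIntegrable LL volume (-(n : ℝ) * π) ((n : ℝ) * π) := by
  induction n with
  | zero => simp
  | succ n ih =>
    have hL : IntervalIntegrable LL volume (-((n:ℝ)+1) * π) (-(n:ℝ) * π) := by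
      have := LL_int_base (-(n+1 : ℤ))
      push_cast at this
      rw [show (-(n:ℝ)) * π = -((n:ℝ)+1) * π + π by ring]
      exact this
    have hR : IntervalIntegrable LL volume ((n:ℝ) * π) (((n:ℝ)+1) * π) := by
      have := LL_int_base (n : ℤ)
      push_cast at this
      rw [show ((n:ℝ)+1) * π = (n:ℝ) * π + π by ring]
      exact this
    push_cast
    exact (hL.trans ih).trans hR

lemma LL_int (a b : ℝ) : IntervalIntegrable LL volume a b := by
  obtain ⟨n, hn⟩ := exists_nat_ge (max |a| |b|)
  have hpi := Real.pi_gt_three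
  have hmem : ∀ c : ℝ, |c| ≤ n → c ∈ Set.uIcc (-(n:ℝ) * π) ((n:ℝ) * π) := by
    intro c hc
    rw [Set.uIcc_of_le (by nlinarith [abs_nonneg c])]
    rw [abs_le] at hc
    constructor
    · nlinarith
    · nlinarith
  apply (LL_int_nat n).mono_set
  apply Set.uIcc_subset_uIcc
  · exact hmem a ((le_max_left _ _).trans hn)
  · exact hmem b ((le_max_right _ _).trans hn)

lemma LLhalf_int (a b : ℝ) : IntervalIntegrable (fun x => LL (x / 2)) volume a b := by
  have h := (LL_int (a / 2) (b / 2)).comp_mul_right (c := 1/2)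
  have he : (fun x => LL (x * (1/2))) = fun x => LL (x / 2) := by
    funext x; rw [mul_one_div]
  rw [he] at h
  norm_num at h
  convert h using 2 <;> ring

lemma LL_I0 : (∫ x in (0:ℝ)..π, LL x) = 0 := by
  have hpi := Real.pi_pos
  set I := ∫ x in (0:ℝ)..π, LL x with hI
  have hrefl : (∫ x in (0:ℝ)..(π/2), LL x) = ∫ x in (π/2)..π, LL x := by
    have h := intervalIntegral.integral_comp_sub_left (a := 0) (b := π/2) LL π
    have he : (∫ x in (0:ℝ)..(π/2), LL (π - x)) = ∫ x in (0:ℝ)..(π/2), LL x := by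
      apply intervalIntegral.integral_congr
      intro x _; exact LL_refl x
    rw [he] at h
    rw [h, show π - π / 2 = π / 2 by ring, sub_zero]
  have hsplit : I = (∫ x in (0:ℝ)..(π/2), LL x) + ∫ x in (π/2)..π, LL x :=
    (intervalIntegral.integral_add_adjacent_intervals (LL_int 0 (π/2)) (LL_int (π/2) π)).symm
  have hhalf : (∫ x in (0:ℝ)..(π/2), LL x) = I / 2 := by
    rw [hsplit, ← hrefl]; ring
  -- duplication identity a.e.
  have hae : ∀ᵐ x : ℝ, x ∈ Set.uIoc (0:ℝ) π → LL x = LL (x / 2) + LL ((π - x) / 2) := by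
    have hne : ∀ᵐ x : ℝ, x ≠ π := by
      refine Filter.eventually_iff.mpr (MeasureTheory.mem_ae_iff.mpr ?_)
      simpa using Real.volume_singleton (a := π)
    filter_upwards [hne] with x hx hmem
    rw [Set.uIoc_of_le hpi.le] at hmem
    have hx0 : 0 < x := hmem.1
    have hxpi : x < π := lt_of_le_of_ne hmem.2 hx
    have hs : 0 < Real.sin (x / 2) :=
      Real.sin_pos_of_pos_of_lt_pi (by linarith) (by linarith)
    have hc : 0 < Real.cos (x / 2) :=
      Real.cos_pos_of_mem_Ioo ⟨by linarith, by linarith⟩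
    have hsx : Real.sin x = 2 * Real.sin (x / 2) * Real.cos (x / 2) := by
      have := Real.sin_two_mul (x / 2)
      rw [show 2 * (x / 2) = x by ring] at this
      linarith
    have h2 : Real.sin ((π - x) / 2) = Real.cos (x / 2) := by
      rw [show (π - x) / 2 = π / 2 - x / 2 by ring, Real.sin_pi_div_two_sub]
    have hsxpos : 0 < Real.sin x := Real.sin_pos_of_pos_of_lt_pi hx0 hxpi
    rw [LL, LL, LL, h2, abs_of_pos (by linarith), abs_of_pos (by linarith),
      abs_of_pos (by linarith), hsx,
      show 2 * (2 * Real.sin (x/2) * Real.cos (x/2)) = (2 * Real.sin (x/2)) * (2 * Real.cos (x/2)) by ring,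
      Real.log_mul (by positivity) (by positivity)]
  have hdup : I = (∫ x in (0:ℝ)..π, LL (x / 2)) + ∫ x in (0:ℝ)..π, LL ((π - x) / 2) := by
    rw [hI, intervalIntegral.integral_congr_ae hae]
    apply intervalIntegral.integral_add (LLhalf_int 0 π)
    simpa using (LLhalf_int π 0).comp_sub_left π
  have he1 : (∫ x in (0:ℝ)..π, LL (x / 2)) = I := by
    rw [intervalIntegral.integral_comp_div (f := LL) (c := 2) two_ne_zero]
    norm_num
    rw [hhalf]; ring
  have he2 : (∫ x in (0:ℝ)..π, LL ((π - x) / 2)) = I := by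
    have h := intervalIntegral.integral_comp_sub_left (a := 0) (b := π) (fun y => LL (y / 2)) π
    rw [h]
    norm_num
    rw [hhalf]; ring
  rw [he1, he2] at hdup
  linarith

lemma LL_period_int (c : ℝ) : (∫ x in c..(c + π), LL x) = 0 := by
  rw [LL_per.intervalIntegral_add_eq c 0]
  simpa using LL_I0

lemma main2 (r : ℝ) (hr : |r| ≤ 2) :
    (∫ θ in (0:ℝ)..(2 * π), Real.log |2 * Real.cos θ + r|) = 0 := by
  rw [abs_le] at hr
  set α := Real.arccos (-(r / 2)) with hα
  have hcosα : Real.cos α = -(r / 2) :=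
    Real.cos_arccos (by linarith) (by linarith)
  -- a.e. the integrand is LL ((θ+α)/2) + LL ((θ-α)/2)
  have hnull : ∀ c : ℝ, volume {θ : ℝ | Real.sin ((θ + c) / 2) = 0} = 0 := by
    intro c
    refine measure_mono_null ?_
      ((Set.countable_range fun n : ℤ => 2 * (n : ℝ) * π - c).measure_zero _)
    intro θ hθ
    rw [Set.mem_setOf_eq, Real.sin_eq_zero_iff] at hθ
    obtain ⟨n, hn⟩ := hθ
    refine ⟨n, ?_⟩
    show 2 * (n : ℝ) * π - c = θ
    linarith
  have hae1 : ∀ᵐ θ : ℝ, Real.sin ((θ + α) / 2) ≠ 0 := by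
    rw [MeasureTheory.ae_iff]
    simpa [not_not] using hnull α
  have hae2 : ∀ᵐ θ : ℝ, Real.sin ((θ + -α) / 2) ≠ 0 := by
    rw [MeasureTheory.ae_iff]
    simpa [not_not] using hnull (-α)
  have hkey : (∫ θ in (0:ℝ)..(2 * π), Real.log |2 * Real.cos θ + r|)
      = ∫ θ in (0:ℝ)..(2 * π), (LL ((θ + α) / 2) + LL ((θ - α) / 2)) := by
    apply intervalIntegral.integral_congr_ae
    filter_upwards [hae1, hae2] with θ h1 h2 _
    have hid : 2 * Real.cos θ + r =
        (2 * Real.sin ((θ + α) / 2)) * (-(2 * Real.sin ((θ - α) / 2))) := by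
      have h := Real.cos_sub_cos θ α
      have : 2 * Real.cos θ + r = 2 * (Real.cos θ - Real.cos α) := by
        rw [hcosα]; ring
      rw [this, h]; ring
    rw [hid, abs_mul, abs_neg]
    rw [Real.log_mul (by simpa using h1) (by simp; simpa [sub_eq_add_neg] using h2)]
    rfl
  rw [hkey]
  have hint1 : IntervalIntegrable (fun θ => LL ((θ + α) / 2)) volume 0 (2 * π) := by
    simpa using (LLhalf_int α (2 * π + α)).comp_add_right α
  have hint2 : IntervalIntegrable (fun θ => LL ((θ - α) / 2)) volume 0 (2 * π) := by
    simpa using (LLhalf_int (-α) (2 * π - α)).comp_sub_right α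
  rw [intervalIntegral.integral_add hint1 hint2]
  have hE : ∀ c : ℝ, (∫ θ in (0:ℝ)..(2 * π), LL ((θ + c) / 2)) = 0 := by
    intro c
    have h1 : (∫ θ in (0:ℝ)..(2 * π), LL ((θ + c) / 2))
        = ∫ u in c..(2 * π + c), LL (u / 2) := by
      have := intervalIntegral.integral_comp_add_right (a := 0) (b := 2 * π)
        (fun u => LL (u / 2)) c
      simpa using this
    rw [h1, intervalIntegral.integral_comp_div (f := LL) (c := 2) two_ne_zero,
      show (2 * π + c) / 2 = c / 2 + π by ring]
    rw [LL_period_int (c / 2)]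
    simp
  have hE2 : (∫ θ in (0:ℝ)..(2 * π), LL ((θ - α) / 2)) = 0 := by
    have := hE (-α)
    simpa [sub_eq_add_neg] using this
  rw [hE α, hE2, add_zero]

lemma cxabs (r : ℝ) (θ : ℝ) :
    ‖Complex.exp (2 * Complex.I * θ) +
      (r : ℂ) * Complex.exp (Complex.I * θ) + 1‖ = |2 * Real.cos θ + r| := by
  have hz : Complex.exp (Complex.I * θ) * Complex.exp (-(Complex.I * θ)) = 1 := by
    rw [← Complex.exp_add]; simp
  have h2 : Complex.exp (2 * Complex.I * θ)
      = Complex.exp (Complex.I * θ) * Complex.exp (Complex.I * θ) := by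
    rw [← Complex.exp_add]; ring_nf
  have hcos : (2 : ℂ) * Complex.cos θ
      = Complex.exp (Complex.I * θ) + Complex.exp (-(Complex.I * θ)) := by
    rw [Complex.two_cos]; ring_nf
  have key : Complex.exp (2 * Complex.I * θ) + (r : ℂ) * Complex.exp (Complex.I * θ) + 1
      = Complex.exp (Complex.I * θ) * (2 * Complex.cos θ + r) := by
    linear_combination h2 - hz + (-Complex.exp (Complex.I * (θ:ℂ))) * hcos
  rw [key, norm_mul, Complex.norm_exp]
  have hre : (Complex.I * (θ:ℂ)).re = 0 := by simp
  rw [hre, Real.exp_zero, one_mul]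
  rw [show (2 * Complex.cos (θ:ℂ) + (r:ℂ)) = ((2 * Real.cos θ + r : ℝ) : ℂ) by
    push_cast [Complex.ofReal_cos]; ring]
  rw [Complex.norm_real, Real.norm_eq_abs]

end JensenHelpers

/-- Jensen-formula step: for real `r` with `|r| ≤ 2`, the one-variable Mahler measure of
`x² + r x + 1` vanishes; that is, `∫₀^{2π} log |e^{2iθ} + r e^{iθ} + 1| dθ = 0`, equivalently
`∫₀^{2π} log |2 cos θ + r| dθ = 0`. -/
theorem jensen_step (r : ℝ) (hr : |r| ≤ 2) :
    (∫ θ in (0:ℝ)..(2 * π),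
        Real.log ‖Complex.exp (2 * Complex.I * θ) +
          (r : ℂ) * Complex.exp (Complex.I * θ) + 1‖ = 0) ∧
    (∫ θ in (0:ℝ)..(2 * π), Real.log |2 * Real.cos θ + r| = 0) := by
  have h2 := main2 r hr
  refine ⟨?_, h2⟩
  rw [intervalIntegral.integral_congr (g := fun θ => Real.log |2 * Real.cos θ + r|)
    (fun θ _ => by rw [cxabs])]
  exact h2
end

section
/- For real v with 1 < v < √2, the following equality of elliptic integrals holds: ∫_{3−2v²}^{1} dT / √((1 − T²)(T + 2v² − 1)(T + 2v² − 3)) = ∫_{(√(2−v²)−v²+1)/v}^{1} dt / √((1 − t²)(v² t² + 2(v² − 1)v t + v⁴ − v² − 1)). -/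
open Real intervalIntegral

/-- Lemma 6 (`lem-EI1`): for real `v` with `1 < v < √2`,
`∫_{3−2v²}^{1} dT/√((1−T²)(T+2v²−1)(T+2v²−3))
  = ∫_{(√(2−v²)−v²+1)/v}^{1} dt/√((1−t²)(v²t²+2(v²−1)vt+v⁴−v²−1))`. -/
theorem elliptic_integral_identity (v : ℝ) (hv1 : 1 < v) (hv2 : v < Real.sqrt 2) :
    (∫ T in (3 - 2 * v ^ 2)..(1:ℝ),
        1 / Real.sqrt ((1 - T ^ 2) * (T + 2 * v ^ 2 - 1) * (T + 2 * v ^ 2 - 3))) =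
    ∫ t in ((Real.sqrt (2 - v ^ 2) - v ^ 2 + 1) / v)..(1:ℝ),
        1 / Real.sqrt ((1 - t ^ 2) *
          (v ^ 2 * t ^ 2 + 2 * (v ^ 2 - 1) * v * t + v ^ 4 - v ^ 2 - 1)) := by
  have hv0 : (0:ℝ) < v := lt_trans one_pos hv1
  have hs2 : (Real.sqrt 2) ^ 2 = 2 := Real.sq_sqrt (by norm_num)
  have hv22 : v ^ 2 < 2 := by nlinarith [Real.sqrt_nonneg 2]
  set w : ℝ := Real.sqrt (2 - v ^ 2) with hw
  have hw2 : w ^ 2 = 2 - v ^ 2 := Real.sq_sqrt (by linarith)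
  have hw0 : 0 < w := Real.sqrt_pos.mpr (by linarith)
  have hw1 : w < 1 := by nlinarith
  set r : ℝ := (w - v ^ 2 + 1) / v with hr
  have hrv : v * r = w - v ^ 2 + 1 := by
    rw [hr]; field_simp
  have hr1 : r < 1 := by
    rw [hr, div_lt_one hv0]; nlinarith
  have hrm1 : -1 < r := by
    rw [hr, lt_div_iff₀ hv0]; nlinarith
  have h31 : (3:ℝ) - 2 * v ^ 2 < 1 := by nlinarith
  set φ : ℝ → ℝ := fun t => (2 * v ^ 2 * t ^ 2 + 2 * v * t + 1 - v ^ 2) / (2 * v * t + v ^ 2 + 1)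
    with hφ
  set φ' : ℝ → ℝ := fun t => 4 * v ^ 2 * (t + v) * (v * t + 1) / (2 * v * t + v ^ 2 + 1) ^ 2
    with hφ'
  have hD : ∀ t : ℝ, -1 < t → 0 < 2 * v * t + v ^ 2 + 1 := by
    intro t ht; nlinarith
  have hder : ∀ t : ℝ, -1 < t → HasDerivAt φ (φ' t) t := by
    intro t ht
    have hDt := hD t ht
    have h1 : HasDerivAt (fun x : ℝ => 2 * v ^ 2 * x ^ 2 + 2 * v * x + 1 - v ^ 2)
        (2 * v ^ 2 * (2 * t) + 2 * v) t := by
      have hx2 : HasDerivAt (fun x : ℝ => x ^ 2) (2 * t) t := by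
        simpa using hasDerivAt_pow 2 t
      have := ((hx2.const_mul (2 * v ^ 2)).add ((hasDerivAt_id t).const_mul (2 * v))).add_const
        (1 - v ^ 2)
      convert this using 1
      · rfl
      · rfl
      · funext x; simp only [id_eq, Pi.add_apply]; ring
      · ring
    have h2 : HasDerivAt (fun x : ℝ => 2 * v * x + v ^ 2 + 1) (2 * v) t := by
      have := ((hasDerivAt_id t).const_mul (2 * v)).add_const (v ^ 2 + 1)
      convert this using 1
      · rfl
      · rfl
      · funext x; simp only [id_eq]; ring
      · ring
    have h3 := h1.div h2 hDt.ne'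
    convert h3 using 1
    · rfl
    · rfl
    · rfl
    rw [hφ']
    field_simp
    ring
  have hIooI : Set.Ioo r 1 ⊆ Set.Ioi (-1 : ℝ) := fun x hx => lt_trans hrm1 hx.1
  have hcont : ContinuousOn φ (Set.Icc r 1) := by
    intro x hx
    have hx1 : -1 < x := lt_of_lt_of_le hrm1 hx.1
    exact ((hder x hx1).continuousAt).continuousWithinAt
  have hmono : StrictMonoOn φ (Set.Icc r 1) := by
    apply strictMonoOn_of_hasDerivWithinAt_pos (convex_Icc r 1) hcont
    · intro x hx
      rw [interior_Icc] at hx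
      exact ((hder x (lt_trans hrm1 hx.1)).hasDerivWithinAt)
    · intro x hx
      rw [interior_Icc] at hx
      have hx1 : -1 < x := lt_trans hrm1 hx.1
      have hxv : 0 < x + v := by linarith
      have hvx : 0 < v * x + 1 := by
        have : v * r < v * x := by exact (mul_lt_mul_iff_right₀ hv0).mpr hx.1
        nlinarith
      have hDx := hD x hx1
      rw [hφ']
      exact div_pos (mul_pos (mul_pos (by positivity) hxv) hvx) (pow_pos hDx 2)
  have hφr : φ r = 3 - 2 * v ^ 2 := by
    rw [hφ]
    rw [div_eq_iff (hD r hrm1).ne']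
    have h1 : r = (w - v ^ 2 + 1) / v := hr
    rw [h1]
    field_simp
    linear_combination 2 * hw2
  have hφ1 : φ 1 = 1 := by
    rw [hφ]
    have : 2 * v * (1:ℝ) + v ^ 2 + 1 ≠ 0 := (hD 1 (by norm_num)).ne'
    field_simp
    ring
  have himage : φ '' Set.Ioo r 1 = Set.Ioo (3 - 2 * v ^ 2) 1 := by
    apply Set.Subset.antisymm
    · rintro _ ⟨t, ht, rfl⟩
      constructor
      · rw [← hφr]
        exact hmono (Set.left_mem_Icc.mpr hr1.le) (Set.mem_Icc.mpr ⟨ht.1.le, ht.2.le⟩) ht.1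
      · rw [← hφ1]
        exact hmono (Set.mem_Icc.mpr ⟨ht.1.le, ht.2.le⟩) (Set.right_mem_Icc.mpr hr1.le) ht.2
    · have h := intermediate_value_Ioo hr1.le hcont
      rw [hφr, hφ1] at h
      exact h
  rw [intervalIntegral.integral_of_le h31.le, intervalIntegral.integral_of_le hr1.le,
    MeasureTheory.integral_Ioc_eq_integral_Ioo, MeasureTheory.integral_Ioc_eq_integral_Ioo,
    ← himage,
    MeasureTheory.integral_image_eq_integral_abs_deriv_smul measurableSet_Ioo
      (fun x hx => ((hder x (hIooI hx)).hasDerivWithinAt))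
      (hmono.injOn.mono Set.Ioo_subset_Icc_self) _]
  apply MeasureTheory.setIntegral_congr_fun measurableSet_Ioo
  intro t ht
  have ht1 : -1 < t := hIooI ht
  have hDt : 0 < 2 * v * t + v ^ 2 + 1 := hD t ht1
  have hxv : 0 < t + v := by linarith
  have hvx : 0 < v * t + 1 := by
    have : v * r < v * t := (mul_lt_mul_iff_right₀ hv0).mpr ht.1
    nlinarith
  have hc : 0 < φ' t := by
    rw [hφ']
    exact div_pos (mul_pos (mul_pos (by positivity) hxv) hvx) (pow_pos hDt 2)
  have hkey : (1 - (φ t) ^ 2) * (φ t + 2 * v ^ 2 - 1) * (φ t + 2 * v ^ 2 - 3)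
      = (φ' t) ^ 2 * ((1 - t ^ 2) *
        (v ^ 2 * t ^ 2 + 2 * (v ^ 2 - 1) * v * t + v ^ 4 - v ^ 2 - 1)) := by
    rw [hφ, hφ']
    beta_reduce
    have hne : v * (2 * t + v) + 1 ≠ 0 := (by linarith [hDt] : (0:ℝ) < v * (2 * t + v) + 1).ne'
    field_simp
    ring
  simp only [smul_eq_mul]
  rw [hkey, Real.sqrt_mul (sq_nonneg _), Real.sqrt_sq hc.le, abs_of_pos hc,
    one_div, mul_inv, ← mul_assoc, mul_inv_cancel₀ hc.ne', one_mul, one_div]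
end

section
/- For real v with 1 < v < √2, one has v · ∫_{(√(2−v²)−v²+1)/v}^{1} (2t + v) dt / √((1 − t²)(v² t² + 2(v² − 1)v t + v⁴ − v² − 1)) = 3π/2. -/
set_option maxHeartbeats 1000000

open Real intervalIntegral

/-- FTC piece lemma: if `A' = -4v²(2t+v)B`, `A² + 4v²B²P = c²`, and `P, B > 0` on the
open interval, then `∫ (2t+v)/√P = (1/(2v)) (arccos (A r / c) - arccos (A l / c))`. -/
lemma elliptic_ftc_piece (v c l r : ℝ) (A B P : ℝ → ℝ)
    (hv : 0 < v) (hc : 0 < c) (hlr : l ≤ r)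
    (hA : ∀ t, HasDerivAt A (-4 * v ^ 2 * (2 * t + v) * B t) t)
    (hpell : ∀ t, (A t) ^ 2 + 4 * v ^ 2 * (B t) ^ 2 * P t = c ^ 2)
    (hPpos : ∀ x ∈ Set.Ioo l r, 0 < P x)
    (hBpos : ∀ x ∈ Set.Ioo l r, 0 < B x)
    (hint : IntervalIntegrable (fun t => (2 * t + v) / Real.sqrt (P t))
      MeasureTheory.volume l r) :
    ∫ t in l..r, (2 * t + v) / Real.sqrt (P t)
      = (1 / (2 * v)) * (Real.arccos (A r / c) - Real.arccos (A l / c)) := by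
  have hAc : Continuous A := by
    have : Differentiable ℝ A := fun t => (hA t).differentiableAt
    exact this.continuous
  have hcont : ContinuousOn (fun t => 1 / (2 * v) * Real.arccos (A t / c))
      (Set.Icc l r) :=
    (continuous_const.mul (Real.continuous_arccos.comp (hAc.div_const c))).continuousOn
  have hderiv : ∀ x ∈ Set.Ioo l r,
      HasDerivWithinAt (fun t => 1 / (2 * v) * Real.arccos (A t / c))
        ((2 * x + v) / Real.sqrt (P x)) (Set.Ioi x) x := by
    intro x hx
    have hPx := hPpos x hx
    have hBx := hBpos x hx
    have hkey : 0 < 4 * v ^ 2 * (B x) ^ 2 * P x := by positivity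
    have hA2 : (A x) ^ 2 < c ^ 2 := by nlinarith [hpell x]
    have h1 : A x / c < 1 := by
      rw [div_lt_one hc]; nlinarith
    have h2 : -1 < A x / c := by
      rw [lt_div_iff₀ hc]; nlinarith
    have hd0 : HasDerivAt (fun y => A y / c) (-4 * v ^ 2 * (2 * x + v) * B x / c) x :=
      (hA x).div_const c
    have hd1 : HasDerivAt (fun y => Real.arccos (A y / c))
        (-(1 / Real.sqrt (1 - (A x / c) ^ 2)) * (-4 * v ^ 2 * (2 * x + v) * B x / c)) x :=
      by have := (Real.hasDerivAt_arccos (ne_of_gt h2) (ne_of_lt h1)).comp x hd0; exact this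
    have hsq : 1 - (A x / c) ^ 2 = (2 * v * B x / c) ^ 2 * P x := by
      field_simp
      linear_combination (-1 : ℝ) * hpell x
    have hsqrt : Real.sqrt (1 - (A x / c) ^ 2) = (2 * v * B x / c) * Real.sqrt (P x) := by
      rw [hsq, Real.sqrt_mul (sq_nonneg _), Real.sqrt_sq (by positivity)]
    have hd2 := hd1.const_mul (1 / (2 * v))
    have hsP : 0 < Real.sqrt (P x) := Real.sqrt_pos.mpr hPx
    have hval : (1 / (2 * v)) *
        (-(1 / Real.sqrt (1 - (A x / c) ^ 2)) * (-4 * v ^ 2 * (2 * x + v) * B x / c))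
        = (2 * x + v) / Real.sqrt (P x) := by
      rw [hsqrt]
      field_simp
      ring
    rw [hval] at hd2
    exact hd2.hasDerivWithinAt
  have key := intervalIntegral.integral_eq_sub_of_hasDeriv_right_of_le
    (f' := fun t => (2 * t + v) / Real.sqrt (P t)) hlr hcont hderiv hint
  rw [key]
  show 1 / (2 * v) * Real.arccos (A r / c) - 1 / (2 * v) * Real.arccos (A l / c)
      = 1 / (2 * v) * (Real.arccos (A r / c) - Real.arccos (A l / c))
  ring

/-- Lemma 7 (`lem-EI2`): for real `v` with `1 < v < √2`,
`v ∫_{(√(2−v²)−v²+1)/v}^{1} (2t+v) dt/√((1−t²)(v²t²+2(v²−1)vt+v⁴−v²−1)) = 3π/2`. -/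
theorem elliptic_integral_eval (v : ℝ) (hv1 : 1 < v) (hv2 : v < Real.sqrt 2) :
    v * ∫ t in ((Real.sqrt (2 - v ^ 2) - v ^ 2 + 1) / v)..(1:ℝ),
        (2 * t + v) / Real.sqrt ((1 - t ^ 2) *
          (v ^ 2 * t ^ 2 + 2 * (v ^ 2 - 1) * v * t + v ^ 4 - v ^ 2 - 1)) =
      3 * π / 2 := by
  have hv0 : (0:ℝ) < v := lt_trans one_pos hv1
  have h2v : (0:ℝ) < 2 - v ^ 2 := by
    nlinarith [Real.mul_self_sqrt (show (0:ℝ) ≤ 2 by norm_num), Real.sqrt_nonneg 2]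
  set s : ℝ := Real.sqrt (2 - v ^ 2) with hs_def
  have hs2 : s ^ 2 = 2 - v ^ 2 := Real.sq_sqrt h2v.le
  have hs0 : 0 < s := Real.sqrt_pos.mpr h2v
  have hs1 : s < 1 := by nlinarith
  have hv21 : 1 < v ^ 2 := by nlinarith
  set a : ℝ := (s - v ^ 2 + 1) / v with ha_def
  set p : ℝ := (2 - v ^ 2) / v with hp_def
  set q : ℝ := 1 / v with hq_def
  have hua : v * a = s + 1 - v ^ 2 := by rw [ha_def]; field_simp; ring
  have hup : v * p = 2 - v ^ 2 := by rw [hp_def]; field_simp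
  have huq : v * q = 1 := by rw [hq_def]; field_simp
  have hap : a < p := by
    rw [ha_def, hp_def, div_lt_div_iff₀ hv0 hv0]; nlinarith
  have hpq : p < q := by
    rw [hp_def, hq_def, div_lt_div_iff₀ hv0 hv0]; nlinarith
  have hq1 : q < 1 := by rw [hq_def, div_lt_one hv0]; exact hv1
  have hq0 : 0 < q := by rw [hq_def]; positivity
  have ham : (-1:ℝ) < a := by
    rw [ha_def, lt_div_iff₀ hv0]; nlinarith
  have ha1 : a < 1 := hap.trans (hpq.trans hq1)
  -- main algebraic objects
  set c : ℝ := (v ^ 2 - 1) ^ 3 with hc_def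
  have hc0 : 0 < c := by rw [hc_def]; exact pow_pos (by nlinarith) 3
  set A : ℝ → ℝ := fun t => -2 * v ^ 4 * t ^ 4 + (8 * v ^ 3 - 4 * v ^ 5) * t ^ 3
      + (10 * v ^ 4 - 2 * v ^ 6 - 8 * v ^ 2) * t ^ 2 + (4 * v ^ 5 - 8 * v ^ 3) * t
      + (v ^ 6 - 5 * v ^ 4 + 5 * v ^ 2 + 1) with hA_def
  set B : ℝ → ℝ := fun t => v ^ 2 * t ^ 2 + (v ^ 3 - 3 * v) * t + (2 - v ^ 2) with hB_def
  -- derivative of A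
  have hA' : ∀ t : ℝ, HasDerivAt A (-4 * v ^ 2 * (2 * t + v) * B t) t := by
    intro t
    have h := (((((hasDerivAt_pow 4 t).const_mul (-2 * v ^ 4)).add
        ((hasDerivAt_pow 3 t).const_mul (8 * v ^ 3 - 4 * v ^ 5))).add
        ((hasDerivAt_pow 2 t).const_mul (10 * v ^ 4 - 2 * v ^ 6 - 8 * v ^ 2))).add
        ((hasDerivAt_id t).const_mul (4 * v ^ 5 - 8 * v ^ 3))).add_const
        (v ^ 6 - 5 * v ^ 4 + 5 * v ^ 2 + 1)
    rw [hA_def, hB_def]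
    refine h.congr_deriv ?_
    push_cast
    ring
  -- Pell identity
  have hPell : ∀ t : ℝ, (A t) ^ 2 + 4 * v ^ 2 * (B t) ^ 2 *
      ((1 - t ^ 2) * (v ^ 2 * t ^ 2 + 2 * (v ^ 2 - 1) * v * t + v ^ 4 - v ^ 2 - 1))
      = c ^ 2 := by
    intro t
    rw [hA_def, hB_def, hc_def]
    ring
  -- factorization of P using s
  have hfact : ∀ y : ℝ,
      (1 - y ^ 2) * (v ^ 2 * y ^ 2 + 2 * (v ^ 2 - 1) * v * y + v ^ 4 - v ^ 2 - 1)
      = (1 - y) * ((1 + y) * ((v * y - v * a) * (v * y + v ^ 2 - 1 + s))) := by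
    intro y
    linear_combination ((1 - y ^ 2) * (s + v ^ 2 - 1 + v * y)) * hua + (1 - y ^ 2) * hs2
  -- positivity of P on (a,1)
  have hPpos : ∀ x : ℝ, a < x → x < 1 →
      0 < (1 - x ^ 2) * (v ^ 2 * x ^ 2 + 2 * (v ^ 2 - 1) * v * x + v ^ 4 - v ^ 2 - 1) := by
    intro x h1 h2
    rw [hfact x]
    have hvx : v * a < v * x := (mul_lt_mul_iff_right₀ hv0).mpr h1
    apply mul_pos (by linarith)
    apply mul_pos (by linarith)
    apply mul_pos (by linarith)
    linarith [hua, hs0]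
  -- factorization of B
  have hBfact : ∀ x : ℝ, B x = (v * x - (2 - v ^ 2)) * (v * x - 1) := by
    intro x; rw [hB_def]; ring
  -- endpoint evaluations of A
  have hAa : A a = c := by
    rw [hA_def, hc_def]
    linear_combination ((-2 * v ^ 3) * a ^ 3 + (6 * v ^ 2 - 2 * v ^ 4 - 2 * v ^ 2 * s) * a ^ 2
      + (10 * v ^ 3 - 2 * v ^ 5 - 8 * v + (8 * v - 4 * v ^ 3) * (s + 1 - v ^ 2)
        - 2 * v * (s + 1 - v ^ 2) ^ 2) * a
      + (4 * v ^ 4 - 8 * v ^ 2 + (10 * v ^ 2 - 2 * v ^ 4 - 8) * (s + 1 - v ^ 2)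
        + (8 - 4 * v ^ 2) * (s + 1 - v ^ 2) ^ 2 - 2 * (s + 1 - v ^ 2) ^ 3)) * hua
      + (-2 * (s - v ^ 2) ^ 2) * hs2
  have hAp : A p = -c := by
    rw [hA_def, hc_def]
    linear_combination ((-2 * v ^ 3) * p ^ 3 + (4 * v ^ 2 - 2 * v ^ 4) * p ^ 2
      + 2 * v ^ 3 * p + (2 * v ^ 4 - 4 * v ^ 2)) * hup
  have hAq : A q = c := by
    rw [hA_def, hc_def]
    linear_combination ((-2 * v ^ 3) * q ^ 3 + (6 * v ^ 2 - 4 * v ^ 4) * q ^ 2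
      + (6 * v ^ 3 - 2 * v ^ 5 - 2 * v) * q + (2 * v ^ 4 - 2 * v ^ 2 - 2)) * huq
  have hA1 : A 1 = -c := by rw [hA_def, hc_def]; ring
  have hccm : (-c) / c = -1 := by rw [neg_div, div_self hc0.ne']
  have hccp : c / c = 1 := div_self hc0.ne'
  -- sign of B on pieces
  have hB1 : ∀ x ∈ Set.Ioo a p, 0 < B x := by
    intro x hx
    rw [hBfact x]
    have h1 : v * x < v * p := (mul_lt_mul_iff_right₀ hv0).mpr hx.2
    have h2 : v * x < v * q := (mul_lt_mul_iff_right₀ hv0).mpr (hx.2.trans hpq)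
    rw [hup] at h1; rw [huq] at h2
    nlinarith
  have hB2 : ∀ x ∈ Set.Ioo p q, 0 < -B x := by
    intro x hx
    rw [hBfact x]
    have h1 : v * p < v * x := (mul_lt_mul_iff_right₀ hv0).mpr hx.1
    have h2 : v * x < v * q := (mul_lt_mul_iff_right₀ hv0).mpr hx.2
    rw [hup] at h1; rw [huq] at h2
    nlinarith
  have hB3 : ∀ x ∈ Set.Ioo q 1, 0 < B x := by
    intro x hx
    rw [hBfact x]
    have h1 : v * q < v * x := (mul_lt_mul_iff_right₀ hv0).mpr hx.1
    have h2 : v * p < v * x := (mul_lt_mul_iff_right₀ hv0).mpr (hpq.trans hx.1)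
    rw [hup] at h2; rw [huq] at h1
    nlinarith
  -- numerator positivity
  have hnum : ∀ x : ℝ, a < x → 0 < 2 * x + v := by
    intro x hx
    have h2av : 0 < v * (2 * a + v) := by
      have : v * (2 * a + v) = 2 * (v * a) + v ^ 2 := by ring
      rw [this, hua]
      nlinarith [hs0, hs2, sq_nonneg s]
    rcases mul_pos_iff.mp h2av with ⟨_, h⟩ | ⟨h, _⟩
    · linarith
    · linarith
  -- integrability on [a,p]
  have hK1 : 0 < (1 - p) * ((1 + a) * (2 * s * v)) := by
    have h1p : 0 < 1 - p := by linarith [hpq, hq1]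
    have h1a : 0 < 1 + a := by linarith
    positivity
  have int1 : IntervalIntegrable (fun t => (2 * t + v) / Real.sqrt ((1 - t ^ 2) *
      (v ^ 2 * t ^ 2 + 2 * (v ^ 2 - 1) * v * t + v ^ 4 - v ^ 2 - 1)))
      MeasureTheory.volume a p := by
    apply IntervalIntegrable.mono_fun'
      (g := fun x => ((2 * p + v) / Real.sqrt ((1 - p) * ((1 + a) * (2 * s * v))))
        * (x - a) ^ (-(1/2) : ℝ))
    · have h0 : IntervalIntegrable (fun x : ℝ => x ^ (-(1/2) : ℝ))
          MeasureTheory.volume 0 (p - a) :=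
        intervalIntegral.intervalIntegrable_rpow' (by norm_num)
      have h1 := (h0.comp_sub_right a).const_mul
        ((2 * p + v) / Real.sqrt ((1 - p) * ((1 + a) * (2 * s * v))))
      simpa using h1
    · apply Measurable.aestronglyMeasurable
      apply Measurable.div
      · fun_prop
      · exact (Real.continuous_sqrt.comp (by fun_prop)).measurable
    · filter_upwards [MeasureTheory.ae_restrict_mem measurableSet_uIoc] with x hx
      rw [Set.uIoc_of_le hap.le] at hx
      obtain ⟨hxa, hxp⟩ := hx
      have hx0 : 0 < x - a := sub_pos.mpr hxa
      have hvx : v * a < v * x := (mul_lt_mul_iff_right₀ hv0).mpr hxa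
      have hPlb : (1 - p) * ((1 + a) * (2 * s * v)) * (x - a) ≤ (1 - x ^ 2) *
          (v ^ 2 * x ^ 2 + 2 * (v ^ 2 - 1) * v * x + v ^ 4 - v ^ 2 - 1) := by
        rw [hfact x]
        have e : (1 - p) * ((1 + a) * (2 * s * v)) * (x - a)
            = (1 - p) * ((1 + a) * ((v * x - v * a) * (2 * s))) := by ring
        rw [e]
        have h1p : 0 < 1 - x := by linarith [hxp, hpq, hq1]
        have hin0 : (0:ℝ) ≤ v * x - v * a := by linarith
        have hin1 : (v * x - v * a) * (2 * s) ≤ (v * x - v * a) * (v * x + v ^ 2 - 1 + s) := by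
          apply mul_le_mul_of_nonneg_left ?_ hin0
          linarith [hua]
        have hin2 : (1 + a) * ((v * x - v * a) * (2 * s))
            ≤ (1 + x) * ((v * x - v * a) * (v * x + v ^ 2 - 1 + s)) := by
          apply mul_le_mul (by linarith) hin1 (mul_nonneg hin0 (by positivity)) (by linarith)
        apply mul_le_mul (by linarith) hin2 ?_ (by linarith)
        exact mul_nonneg (by linarith) (mul_nonneg hin0 (by positivity))
      have hsq : Real.sqrt ((1 - p) * ((1 + a) * (2 * s * v))) * Real.sqrt (x - a)
          ≤ Real.sqrt ((1 - x ^ 2) *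
            (v ^ 2 * x ^ 2 + 2 * (v ^ 2 - 1) * v * x + v ^ 4 - v ^ 2 - 1)) := by
        rw [← Real.sqrt_mul hK1.le]
        exact Real.sqrt_le_sqrt hPlb
      have hFn : 0 ≤ (2 * x + v) / Real.sqrt ((1 - x ^ 2) *
          (v ^ 2 * x ^ 2 + 2 * (v ^ 2 - 1) * v * x + v ^ 4 - v ^ 2 - 1)) :=
        div_nonneg (hnum x hxa).le (Real.sqrt_nonneg _)
      rw [Real.norm_eq_abs, abs_of_nonneg hFn]
      have hrw : (x - a) ^ (-(1/2) : ℝ) = (Real.sqrt (x - a))⁻¹ := by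
        rw [Real.sqrt_eq_rpow, ← Real.rpow_neg hx0.le]
      have hsK1 : 0 < Real.sqrt ((1 - p) * ((1 + a) * (2 * s * v))) :=
        Real.sqrt_pos.mpr hK1
      have hsxa : 0 < Real.sqrt (x - a) := Real.sqrt_pos.mpr hx0
      calc (2 * x + v) / Real.sqrt ((1 - x ^ 2) *
            (v ^ 2 * x ^ 2 + 2 * (v ^ 2 - 1) * v * x + v ^ 4 - v ^ 2 - 1))
          ≤ (2 * p + v) / (Real.sqrt ((1 - p) * ((1 + a) * (2 * s * v)))
              * Real.sqrt (x - a)) := by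
            apply div_le_div₀ (by linarith [hnum p hap]) (by linarith)
              (by positivity) hsq
        _ = ((2 * p + v) / Real.sqrt ((1 - p) * ((1 + a) * (2 * s * v))))
              * (x - a) ^ (-(1/2) : ℝ) := by
            rw [hrw]; field_simp
  -- integrability on [p,q]
  have int2 : IntervalIntegrable (fun t => (2 * t + v) / Real.sqrt ((1 - t ^ 2) *
      (v ^ 2 * t ^ 2 + 2 * (v ^ 2 - 1) * v * t + v ^ 4 - v ^ 2 - 1)))
      MeasureTheory.volume p q := by
    apply ContinuousOn.intervalIntegrable
    apply ContinuousOn.div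
    · fun_prop
    · exact (Real.continuous_sqrt.comp (by fun_prop)).continuousOn
    · intro x hx
      rw [Set.uIcc_of_le hpq.le] at hx
      have : 0 < (1 - x ^ 2) *
          (v ^ 2 * x ^ 2 + 2 * (v ^ 2 - 1) * v * x + v ^ 4 - v ^ 2 - 1) :=
        hPpos x (lt_of_lt_of_le hap hx.1) (lt_of_le_of_lt hx.2 hq1)
      exact (Real.sqrt_pos.mpr this).ne'
  -- integrability on [q,1]
  have hqa : (0:ℝ) < v * q - v * a := by
    have := (mul_lt_mul_iff_right₀ hv0).mpr (hap.trans hpq)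
    linarith
  have hqs : (0:ℝ) < v * q + v ^ 2 - 1 + s := by
    rw [huq]; nlinarith [hs0]
  have hK3 : 0 < (1 + q) * ((v * q - v * a) * (v * q + v ^ 2 - 1 + s)) := by
    have h1 : (0:ℝ) < 1 + q := by positivity
    positivity
  have int3 : IntervalIntegrable (fun t => (2 * t + v) / Real.sqrt ((1 - t ^ 2) *
      (v ^ 2 * t ^ 2 + 2 * (v ^ 2 - 1) * v * t + v ^ 4 - v ^ 2 - 1)))
      MeasureTheory.volume q 1 := by
    apply IntervalIntegrable.mono_fun'
      (g := fun x => ((2 * 1 + v) /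
          Real.sqrt ((1 + q) * ((v * q - v * a) * (v * q + v ^ 2 - 1 + s))))
        * (1 - x) ^ (-(1/2) : ℝ))
    · have h0 : IntervalIntegrable (fun x : ℝ => x ^ (-(1/2) : ℝ))
          MeasureTheory.volume 0 (1 - q) :=
        intervalIntegral.intervalIntegrable_rpow' (by norm_num)
      have h1 := ((h0.comp_sub_left 1).symm).const_mul
        ((2 * 1 + v) / Real.sqrt ((1 + q) * ((v * q - v * a) * (v * q + v ^ 2 - 1 + s))))
      simpa using h1
    · apply Measurable.aestronglyMeasurable
      apply Measurable.div
      · fun_prop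
      · exact (Real.continuous_sqrt.comp (by fun_prop)).measurable
    · filter_upwards [MeasureTheory.ae_restrict_mem measurableSet_uIoc] with x hx
      rw [Set.uIoc_of_le hq1.le] at hx
      obtain ⟨hxq, hx1⟩ := hx
      rcases eq_or_lt_of_le hx1 with heq | hx1
      · rw [heq]
        have hP1 : (1 - (1:ℝ) ^ 2) *
            (v ^ 2 * 1 ^ 2 + 2 * (v ^ 2 - 1) * v * 1 + v ^ 4 - v ^ 2 - 1) = 0 := by ring
        rw [hP1, Real.sqrt_zero, div_zero, norm_zero]
        have hz : ((1:ℝ) - 1) ^ (-(1/2) : ℝ) = 0 := by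
          rw [sub_self, Real.zero_rpow (by norm_num)]
        rw [hz, mul_zero]
      · have hx0 : 0 < 1 - x := sub_pos.mpr hx1
        have hxa : a < x := hap.trans (hpq.trans hxq)
        have hvx : v * q < v * x := (mul_lt_mul_iff_right₀ hv0).mpr hxq
        have hPlb : (1 + q) * ((v * q - v * a) * (v * q + v ^ 2 - 1 + s)) * (1 - x)
            ≤ (1 - x ^ 2) *
            (v ^ 2 * x ^ 2 + 2 * (v ^ 2 - 1) * v * x + v ^ 4 - v ^ 2 - 1) := by
          rw [hfact x]
          have e : (1 + q) * ((v * q - v * a) * (v * q + v ^ 2 - 1 + s)) * (1 - x)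
              = (1 - x) * ((1 + q) * ((v * q - v * a) * (v * q + v ^ 2 - 1 + s))) := by
            ring
          rw [e]
          have hin1 : (v * q - v * a) * (v * q + v ^ 2 - 1 + s)
              ≤ (v * x - v * a) * (v * x + v ^ 2 - 1 + s) := by
            apply mul_le_mul (by linarith) (by linarith) (by linarith) (by linarith)
          have hin2 : (1 + q) * ((v * q - v * a) * (v * q + v ^ 2 - 1 + s))
              ≤ (1 + x) * ((v * x - v * a) * (v * x + v ^ 2 - 1 + s)) := by
            apply mul_le_mul (by linarith) hin1 (by positivity) (by linarith [hq0])
          exact mul_le_mul_of_nonneg_left hin2 (by linarith)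
        have hsq : Real.sqrt ((1 + q) * ((v * q - v * a) * (v * q + v ^ 2 - 1 + s)))
              * Real.sqrt (1 - x)
            ≤ Real.sqrt ((1 - x ^ 2) *
              (v ^ 2 * x ^ 2 + 2 * (v ^ 2 - 1) * v * x + v ^ 4 - v ^ 2 - 1)) := by
          rw [← Real.sqrt_mul hK3.le]
          exact Real.sqrt_le_sqrt hPlb
        have hFn : 0 ≤ (2 * x + v) / Real.sqrt ((1 - x ^ 2) *
            (v ^ 2 * x ^ 2 + 2 * (v ^ 2 - 1) * v * x + v ^ 4 - v ^ 2 - 1)) :=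
          div_nonneg (hnum x hxa).le (Real.sqrt_nonneg _)
        rw [Real.norm_eq_abs, abs_of_nonneg hFn]
        have hrw : (1 - x) ^ (-(1/2) : ℝ) = (Real.sqrt (1 - x))⁻¹ := by
          rw [Real.sqrt_eq_rpow, ← Real.rpow_neg hx0.le]
        have hsK3 : 0 < Real.sqrt ((1 + q) * ((v * q - v * a) * (v * q + v ^ 2 - 1 + s))) :=
          Real.sqrt_pos.mpr hK3
        have hsx1 : 0 < Real.sqrt (1 - x) := Real.sqrt_pos.mpr hx0
        calc (2 * x + v) / Real.sqrt ((1 - x ^ 2) *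
              (v ^ 2 * x ^ 2 + 2 * (v ^ 2 - 1) * v * x + v ^ 4 - v ^ 2 - 1))
            ≤ (2 * 1 + v) /
              (Real.sqrt ((1 + q) * ((v * q - v * a) * (v * q + v ^ 2 - 1 + s)))
                * Real.sqrt (1 - x)) := by
              apply div_le_div₀ (by linarith) (by linarith) (by positivity) hsq
          _ = ((2 * 1 + v) /
                Real.sqrt ((1 + q) * ((v * q - v * a) * (v * q + v ^ 2 - 1 + s))))
              * (1 - x) ^ (-(1/2) : ℝ) := by
              rw [hrw]; field_simp
  -- FTC on the three pieces
  have res1 : (∫ t in a..p, (2 * t + v) / Real.sqrt ((1 - t ^ 2) *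
      (v ^ 2 * t ^ 2 + 2 * (v ^ 2 - 1) * v * t + v ^ 4 - v ^ 2 - 1))) = π / (2 * v) := by
    have h := elliptic_ftc_piece v c a p A B
      (fun t => (1 - t ^ 2) * (v ^ 2 * t ^ 2 + 2 * (v ^ 2 - 1) * v * t + v ^ 4 - v ^ 2 - 1))
      hv0 hc0 hap.le hA' hPell
      (fun x hx => hPpos x hx.1 (hx.2.trans (hpq.trans hq1)))
      hB1 int1
    rw [h, hAp, hAa, hccm, hccp, Real.arccos_neg_one, Real.arccos_one]
    ring
  have res2 : (∫ t in p..q, (2 * t + v) / Real.sqrt ((1 - t ^ 2) *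
      (v ^ 2 * t ^ 2 + 2 * (v ^ 2 - 1) * v * t + v ^ 4 - v ^ 2 - 1))) = π / (2 * v) := by
    have hA2' : ∀ t : ℝ, HasDerivAt (fun t => -A t)
        (-4 * v ^ 2 * (2 * t + v) * (-B t)) t := by
      intro t
      have h := (hA' t).neg
      refine h.congr_deriv ?_
      ring
    have hPell2 : ∀ t : ℝ, (-A t) ^ 2 + 4 * v ^ 2 * (-B t) ^ 2 *
        ((1 - t ^ 2) * (v ^ 2 * t ^ 2 + 2 * (v ^ 2 - 1) * v * t + v ^ 4 - v ^ 2 - 1))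
        = c ^ 2 := by
      intro t
      linear_combination hPell t
    have h := elliptic_ftc_piece v c p q (fun t => -A t) (fun t => -B t)
      (fun t => (1 - t ^ 2) * (v ^ 2 * t ^ 2 + 2 * (v ^ 2 - 1) * v * t + v ^ 4 - v ^ 2 - 1))
      hv0 hc0 hpq.le hA2' hPell2
      (fun x hx => hPpos x (hap.trans hx.1) (hx.2.trans hq1))
      hB2 int2
    rw [h]
    rw [hAq, hAp, neg_neg, hccm, hccp, Real.arccos_neg_one, Real.arccos_one]
    ring
  have res3 : (∫ t in q..(1:ℝ), (2 * t + v) / Real.sqrt ((1 - t ^ 2) *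
      (v ^ 2 * t ^ 2 + 2 * (v ^ 2 - 1) * v * t + v ^ 4 - v ^ 2 - 1))) = π / (2 * v) := by
    have h := elliptic_ftc_piece v c q 1 A B
      (fun t => (1 - t ^ 2) * (v ^ 2 * t ^ 2 + 2 * (v ^ 2 - 1) * v * t + v ^ 4 - v ^ 2 - 1))
      hv0 hc0 hq1.le hA' hPell
      (fun x hx => hPpos x ((hap.trans hpq).trans hx.1) hx.2)
      hB3 int3
    rw [h, hA1, hAq, hccm, hccp, Real.arccos_neg_one, Real.arccos_one]
    ring
  -- assemble
  have hsplit2 := intervalIntegral.integral_add_adjacent_intervals int2 int3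
  have hsplit1 := intervalIntegral.integral_add_adjacent_intervals int1 (int2.trans int3)
  rw [← hsplit1, ← hsplit2, res1, res2, res3]
  field_simp
  ring
end

section
/- Let u > √2 + 1 be real and set t₋ = −(u⁴ + 2u³ − 6u − 1)/((u² + 1)(u² + 2u − 1)) and t₊ = (u⁴ − 6u³ + 2u − 1)/((u² + 1)(u² + 2u − 1)), so that −1 ≤ t₋ < t₊ < 1. Then (4/π) ∫_{t₊}^{1} t dt / √((1 − t²)(t − t₋)(t − t₊)) − (4/π) ∫_{−1}^{t₋} t dt / √((1 − t²)(t − t₋)(t − t₊)) = 4. -/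
open Real intervalIntegral Set MeasureTheory

noncomputable def Wf (a t : ℝ) : ℝ := a*(1-t^2)/(1-a*t)
noncomputable def Wdf (a t : ℝ) : ℝ := (-a)*(-(a*t^2)+2*t-a)/(1-a*t)^2
noncomputable def Dlf (a w : ℝ) : ℝ := Real.sqrt (w^2 - 4*w/a + 4)
noncomputable def g1f (a s w : ℝ) : ℝ := (w + Dlf a w)/(2*Dlf a w*Real.sqrt (w*(s-w)))
noncomputable def g2f (a s w : ℝ) : ℝ := (w - Dlf a w)/(2*Dlf a w*Real.sqrt (w*(s-w)))
noncomputable def h0f (s w : ℝ) : ℝ := 1/Real.sqrt (w*(s-w))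
noncomputable def Psif (s θ : ℝ) : ℝ := s*(1-Real.cos θ)/2

set_option maxHeartbeats 1000000 in
theorem tailpart (tm tp a : ℝ) (h1 : -1 < tm) (h2 : tm < tp) (h3 : tp < 1) (h4 : tm + tp < 0)
    (hp : 0 < 1 + tm*tp) (haid : a*(1+tm*tp) = tm+tp) (ha0 : a < 0) (ha1 : -1 < a)
    (hInth : IntegrableOn (h0f (tm+tp)) (Set.Ioo (tm+tp) 0))
    (hIh : ∫ w in Set.Ioo (tm+tp) 0, h0f (tm+tp) w = π) :
    (∫ w in Set.Ioo (tm+tp) 0, g1f a (tm+tp) w)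
      = (∫ w in Set.Ioo (tm+tp) 0, g2f a (tm+tp) w) + π := by
  have ha_ne : a ≠ 0 := ne_of_lt ha0
  have hk1 : (a*(tm+tp)-2)^2 - (4-4*a^2) = a^2*(tm-tp)^2 := by
    linear_combination (4*a)*haid
  have hpp : tm*tp < 1 := by nlinarith
  have haσ : a*(tm+tp) < 2 := by nlinarith
  have hstuff_lb : ∀ w ∈ Set.Icc (tm+tp) 0, (tp-tm)^2 ≤ w^2-4*w/a+4 := by
    rintro w ⟨hw1, hw2⟩
    have haw : a*w ≤ a*(tm+tp) := mul_le_mul_of_nonpos_left hw1 ha0.le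
    have e : a*w - 2 ≤ a*(tm+tp) - 2 := by linarith
    have e2 : a*(tm+tp) - 2 < 0 := by linarith
    have h5 : (a*(tm+tp)-2)^2 ≤ (a*w-2)^2 := by
      nlinarith [mul_nonneg (by linarith : (0:ℝ) ≤ (a*(tm+tp)-2) - (a*w-2))
        (by linarith : (0:ℝ) ≤ -((a*w-2)+(a*(tm+tp)-2)))]
    have hkey : w^2-4*w/a+4 = ((a*w-2)^2-(4-4*a^2))/a^2 := by
      field_simp
      ring
    rw [hkey, le_div_iff₀ (by positivity : (0:ℝ) < a^2)]
    nlinarith [h5, hk1]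
  have hstuff_ub : ∀ w ∈ Set.Icc (tm+tp) 0, w^2-4*w/a+4 ≤ 9 := by
    rintro w ⟨hw1, hw2⟩
    have e1 : w^2 ≤ 4 := by nlinarith
    have e2 : 0 ≤ 4*w/a := by
      rw [show 4*w/a = (-(4*w))/(-a) by rw [neg_div_neg_eq]]
      exact div_nonneg (by linarith) (by linarith)
    linarith
  have hDl_lb : ∀ w ∈ Set.Icc (tm+tp) 0, (tp-tm) ≤ Dlf a w := by
    intro w hw
    have := Real.sqrt_le_sqrt (hstuff_lb w hw)
    rwa [Real.sqrt_sq (by linarith : (0:ℝ) ≤ tp-tm)] at this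
  have hDl_ub : ∀ w ∈ Set.Icc (tm+tp) 0, Dlf a w ≤ 3 := by
    intro w hw
    have := Real.sqrt_le_sqrt (hstuff_ub w hw)
    rwa [show Real.sqrt 9 = 3 by
      rw [show (9:ℝ) = 3^2 by norm_num, Real.sqrt_sq (by norm_num : (0:ℝ) ≤ 3)]] at this
  have hB_bound : ∀ w ∈ Set.Ioo (tm+tp) 0, ‖(w - Dlf a w)/(2*Dlf a w)‖ ≤ 5/(2*(tp-tm)) := by
    rintro w ⟨hw1, hw2⟩
    have hw' : w ∈ Set.Icc (tm+tp) 0 := ⟨hw1.le, hw2.le⟩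
    have hd1 := hDl_lb w hw'
    have hd2 := hDl_ub w hw'
    have hdpos : 0 < Dlf a w := by linarith
    have hwb : -2 < w := by linarith
    have h5 : |w - Dlf a w| ≤ 5 := abs_le.2 ⟨by linarith, by linarith⟩
    rw [Real.norm_eq_abs, abs_div, abs_of_pos (by linarith : (0:ℝ) < 2*Dlf a w)]
    exact div_le_div₀ (by norm_num) h5 (by linarith) (by linarith)
  have hmeasB : Measurable (fun w : ℝ => (w - Dlf a w)/(2*Dlf a w)) := by
    have hc : Continuous fun w : ℝ => Dlf a w := by
      simp only [Dlf]
      exact Real.continuous_sqrt.comp (by continuity)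
    exact (measurable_id.sub hc.measurable).div (measurable_const.mul hc.measurable)
  have hIntg2 : IntegrableOn (g2f a (tm+tp)) (Set.Ioo (tm+tp) 0) := by
    rw [show g2f a (tm+tp) = fun w => ((w - Dlf a w)/(2*Dlf a w)) * h0f (tm+tp) w from
      funext fun w => by simp only [g2f, h0f]; rw [div_mul_div_comm, mul_one]]
    apply Integrable.bdd_mul hInth hmeasB.aestronglyMeasurable
    rw [ae_restrict_iff' measurableSet_Ioo]
    exact ae_of_all _ hB_bound
  rw [← hIh, ← integral_add hIntg2 hInth]
  apply setIntegral_congr_fun measurableSet_Ioo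
  rintro w ⟨hw1, hw2⟩
  have hd : 0 < Dlf a w := by
    have := hstuff_lb w ⟨hw1.le, hw2.le⟩
    simp only [Dlf]
    apply Real.sqrt_pos.2
    nlinarith
  have hs : 0 < Real.sqrt (w*((tm+tp)-w)) := by
    apply Real.sqrt_pos.2
    nlinarith [mul_pos_of_neg_of_neg hw2 (show (tm+tp)-w < 0 by linarith)]
  simp only [g1f, g2f, h0f, Pi.add_apply]
  field_simp
  ring


set_option maxHeartbeats 1000000 in
theorem key (tm tp : ℝ) (h1 : -1 < tm) (h2 : tm < tp) (h3 : tp < 1) (h4 : tm + tp < 0) :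
    (∫ t in tp..(1:ℝ), t / Real.sqrt ((1 - t ^ 2) * (t - tm) * (t - tp))) -
    (∫ t in (-1:ℝ)..tm, t / Real.sqrt ((1 - t ^ 2) * (t - tm) * (t - tp))) = π := by
  have hp : 0 < 1 + tm*tp := by nlinarith
  obtain ⟨a, ha_def⟩ : ∃ a : ℝ, a = (tm+tp)/(1+tm*tp) := ⟨_, rfl⟩
  have haid : a*(1+tm*tp) = tm+tp := by rw [ha_def]; field_simp
  have ha0 : a < 0 := ha_def ▸ div_neg_of_neg_of_pos h4 hp
  have ha1 : -1 < a := by nlinarith [mul_pos (show (0:ℝ) < 1+tm by linarith) (show (0:ℝ) < 1+tp by linarith)]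
  have hlin : ∀ t : ℝ, -1 < t → t ≤ 1 → 0 < 1 - a*t := by
    intro t ht1 ht2
    nlinarith [mul_nonneg (by linarith : (0:ℝ) ≤ 1+a) (by linarith : (0:ℝ) ≤ 1-t),
      mul_pos (by linarith : (0:ℝ) < 1-a) (by linarith : (0:ℝ) < 1+t)]
  -- quadratic q t := -(a*t^2)+2*t-a
  have hqtp_id : -(a*tp^2)+2*tp-a = (1-a*tp)*(tp-tm) := by linear_combination -haid
  have hqtm_id : -(a*tm^2)+2*tm-a = (1-a*tm)*(tm-tp) := by linear_combination -haid
  have hqtp : 0 < -(a*tp^2)+2*tp-a := by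
    rw [hqtp_id]; exact mul_pos (hlin tp (by linarith) (by linarith)) (by linarith)
  have hqtm : -(a*tm^2)+2*tm-a < 0 := by
    rw [hqtm_id]
    exact mul_neg_of_pos_of_neg (hlin tm (by linarith) (by linarith)) (by linarith)
  have hqpos : ∀ t ∈ Set.Ioo tp 1, 0 < -(a*t^2)+2*t-a := by
    rintro t ⟨htl, htr⟩
    have e1 : 0 < 1-a*tp := hlin tp (by linarith) (by linarith)
    have e2 : 0 < 1-a*t := hlin t (by linarith) htr.le
    have e3 : 1-a*tp < 1-a*t := by nlinarith
    have e5 : (1-a*tp)^2 < (1-a*t)^2 := by nlinarith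
    have e6 : 1-a^2 < (1-a*tp)^2 := by nlinarith [mul_pos (neg_pos.2 ha0) hqtp]
    have e7 : 0 < (-a)*(-(a*t^2)+2*t-a) := by nlinarith
    have hna : 0 < -a := neg_pos.2 ha0
    nlinarith [e7, hna]
  have hqneg : ∀ t ∈ Set.Ioo (-1:ℝ) tm, -(a*t^2)+2*t-a < 0 := by
    rintro t ⟨htl, htr⟩
    have e1 : 0 < 1-a*tm := hlin tm (by linarith) (by linarith)
    have e2 : 0 < 1-a*t := hlin t (by linarith) (by linarith)
    have e3 : 1-a*t < 1-a*tm := by nlinarith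
    have e5 : (1-a*t)^2 < (1-a*tm)^2 := by nlinarith
    have e6 : (1-a*tm)^2 < 1-a^2 := by nlinarith [mul_pos (neg_pos.2 ha0) (neg_pos.2 hqtm)]
    have e7 : (-a)*(-(a*t^2)+2*t-a) < 0 := by nlinarith
    have hna : 0 < -a := neg_pos.2 ha0
    nlinarith [e7, hna]
  -- endpoint values of W
  have hWtp : Wf a tp = tm+tp := by
    have := hlin tp (by linarith) (by linarith)
    simp only [Wf]
    rw [div_eq_iff (by linarith : 1 - a*tp ≠ 0)]
    linear_combination haid
  have hWtm : Wf a tm = tm+tp := by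
    have := hlin tm (by linarith) (by linarith)
    simp only [Wf]
    rw [div_eq_iff (by linarith : 1 - a*tm ≠ 0)]
    linear_combination haid
  have hW1 : Wf a 1 = 0 := by simp [Wf]
  have hWm1 : Wf a (-1) = 0 := by simp [Wf]
  -- derivative
  have hasD : ∀ t : ℝ, 1 - a*t ≠ 0 → HasDerivAt (Wf a) (Wdf a t) t := by
    intro t ht
    have h₁ : HasDerivAt (fun s : ℝ => 1 - s^2) (-(2*t)) t := by
      simpa using (hasDerivAt_pow 2 t).const_sub 1
    have h₂ : HasDerivAt (fun s : ℝ => a*(1-s^2)) (a*-(2*t)) t := h₁.const_mul a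
    have h₃ : HasDerivAt (fun s : ℝ => 1 - a*s) (-a) t := by
      simpa using ((hasDerivAt_id t).const_mul a).const_sub 1
    have h₄ := h₂.div h₃ ht
    show HasDerivAt (fun t => a*(1-t^2)/(1-a*t)) (Wdf a t) t
    refine h₄.congr_deriv ?_
    simp only [Wdf]
    field_simp
    ring
  have hcont1 : ContinuousOn (Wf a) (Set.Icc tp 1) := by
    intro x hx
    exact (hasD x (by have := hlin x (by linarith [hx.1]) hx.2; linarith)).continuousAt.continuousWithinAt
  have hcont2 : ContinuousOn (Wf a) (Set.Icc (-1) tm) := by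
    intro x hx
    have hx1 : 0 < 1 - a*x := by
      rcases eq_or_lt_of_le hx.1 with h | h
      · rw [← h]; linarith
      · exact hlin x h (by linarith [hx.2])
    exact (hasD x (by linarith)).continuousAt.continuousWithinAt
  have hmono1 : StrictMonoOn (Wf a) (Set.Icc tp 1) := by
    apply strictMonoOn_of_deriv_pos (convex_Icc _ _) hcont1
    intro x hx
    rw [interior_Icc] at hx
    have hxl : 0 < 1 - a*x := hlin x (by linarith [hx.1]) hx.2.le
    rw [(hasD x (by linarith)).deriv]
    show 0 < (-a)*(-(a*x^2)+2*x-a)/(1-a*x)^2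
    exact div_pos (mul_pos (neg_pos.2 ha0) (hqpos x hx)) (by positivity)
  have hanti2 : StrictAntiOn (Wf a) (Set.Icc (-1) tm) := by
    apply strictAntiOn_of_deriv_neg (convex_Icc _ _) hcont2
    intro x hx
    rw [interior_Icc] at hx
    have hxl : 0 < 1 - a*x := hlin x hx.1 (by linarith [hx.2])
    rw [(hasD x (by linarith)).deriv]
    show (-a)*(-(a*x^2)+2*x-a)/(1-a*x)^2 < 0
    exact div_neg_of_neg_of_pos (mul_neg_of_pos_of_neg (neg_pos.2 ha0) (hqneg x hx)) (by positivity)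
  have himg1 : Wf a '' Set.Ioo tp 1 = Set.Ioo (tm+tp) 0 := by
    apply Set.Subset.antisymm
    · rintro y ⟨x, hx, rfl⟩
      constructor
      · rw [← hWtp]
        exact hmono1 ⟨le_refl tp, h3.le⟩ ⟨hx.1.le, hx.2.le⟩ hx.1
      · rw [← hW1]
        exact hmono1 ⟨hx.1.le, hx.2.le⟩ ⟨h3.le, le_refl 1⟩ hx.2
    · have := intermediate_value_Ioo (le_of_lt h3) hcont1
      rw [hWtp, hW1] at this
      exact this
  have himg2 : Wf a '' Set.Ioo (-1) tm = Set.Ioo (tm+tp) 0 := by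
    apply Set.Subset.antisymm
    · rintro y ⟨x, hx, rfl⟩
      constructor
      · rw [← hWtm]
        exact hanti2 ⟨hx.1.le, hx.2.le⟩ ⟨by linarith, le_refl tm⟩ hx.2
      · rw [← hWm1]
        exact hanti2 ⟨le_refl (-1), by linarith⟩ ⟨hx.1.le, hx.2.le⟩ hx.1
    · have := intermediate_value_Ioo' (by linarith : (-1:ℝ) ≤ tm) hcont2
      rw [hWtm, hWm1] at this
      exact this
  have hp' : (1 + tm*tp) ≠ 0 := hp.ne'
  have hJm : (∫ t in Set.Ioo tp 1, t / Real.sqrt ((1 - t ^ 2) * (t - tm) * (t - tp)))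
      = ∫ w in Set.Ioo (tm+tp) 0, g1f a (tm+tp) w := by
    rw [← himg1, integral_image_eq_integral_abs_deriv_smul measurableSet_Ioo
      (fun x hx => (hasD x (by have := hlin x (by linarith [hx.1]) hx.2.le; linarith)).hasDerivWithinAt)
      (hmono1.injOn.mono Set.Ioo_subset_Icc_self)]
    apply setIntegral_congr_fun measurableSet_Ioo
    rintro t ⟨htl, htr⟩
    simp only [smul_eq_mul]
    have h1t : 0 < 1 - a*t := hlin t (by linarith) htr.le
    have hq : 0 < -(a*t^2)+2*t-a := hqpos t ⟨htl, htr⟩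
    have hQ : 0 < (1 - t ^ 2) * (t - tm) * (t - tp) := by
      have : 0 < 1 - t^2 := by nlinarith
      have h2' : 0 < t - tm := by linarith
      have h3' : 0 < t - tp := by linarith
      positivity
    have hsQ : 0 < Real.sqrt ((1 - t ^ 2) * (t - tm) * (t - tp)) := Real.sqrt_pos.2 hQ
    have hsq2 : Real.sqrt ((1 - t ^ 2) * (t - tm) * (t - tp)) ^ 2
        = (1 - t ^ 2) * (t - tm) * (t - tp) := Real.sq_sqrt hQ.le
    have hden2 : 0 < 1 + tm*tp - (tm+tp)*t := by nlinarith [h1t, hp, haid]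
    have ha_ne : a ≠ 0 := ne_of_lt ha0
    have h1t' : (1 - a*t) ≠ 0 := h1t.ne'
    have hA : Real.sqrt (Wf a t * ((tm+tp) - Wf a t))
        = (-a)*Real.sqrt ((1 - t ^ 2) * (t - tm) * (t - tp))/(1-a*t) := by
      rw [show Wf a t * ((tm+tp) - Wf a t)
          = ((-a)*Real.sqrt ((1 - t ^ 2) * (t - tm) * (t - tp))/(1-a*t))^2 from ?_]
      · exact Real.sqrt_sq (div_nonneg (mul_nonneg (by linarith) (Real.sqrt_nonneg _)) h1t.le)
      · rw [div_pow, mul_pow, hsq2]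
        simp only [Wf]
        rw [ha_def]
        field_simp
        ring
    have hB : Dlf a (Wf a t) = (-(a*t^2)+2*t-a)/(1-a*t) := by
      simp only [Dlf]
      rw [show (Wf a t)^2 - 4*(Wf a t)/a + 4 = ((-(a*t^2)+2*t-a)/(1-a*t))^2 from ?_]
      · exact Real.sqrt_sq (div_nonneg hq.le h1t.le)
      · simp only [Wf]
        field_simp
        ring
    have hC : Wf a t + (-(a*t^2)+2*t-a)/(1-a*t) = 2*t := by
      simp only [Wf]
      field_simp
      ring
    have hD : |Wdf a t| = (-a)*(-(a*t^2)+2*t-a)/(1-a*t)^2 := by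
      simp only [Wdf]
      exact abs_of_pos (div_pos (mul_pos (neg_pos.2 ha0) hq) (pow_pos h1t 2))
    rw [hD]
    simp only [g1f]
    rw [hB, hA, hC]
    field_simp [ne_of_gt (show (0:ℝ) < t * (-(t * a) + 2) - a by linarith), ne_of_gt (show (0:ℝ) < 1 - t * a by linarith)]
  have hJp : (∫ t in Set.Ioo (-1:ℝ) tm, t / Real.sqrt ((1 - t ^ 2) * (t - tm) * (t - tp)))
      = ∫ w in Set.Ioo (tm+tp) 0, g2f a (tm+tp) w := by
    rw [← himg2, integral_image_eq_integral_abs_deriv_smul measurableSet_Ioo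
      (fun x hx => (hasD x (by have := hlin x hx.1 (by linarith [hx.2]); linarith)).hasDerivWithinAt)
      (hanti2.injOn.mono Set.Ioo_subset_Icc_self)]
    apply setIntegral_congr_fun measurableSet_Ioo
    rintro t ⟨htl, htr⟩
    simp only [smul_eq_mul]
    have h1t : 0 < 1 - a*t := hlin t htl (by linarith)
    have hq : -(a*t^2)+2*t-a < 0 := hqneg t ⟨htl, htr⟩
    have hQ : 0 < (1 - t ^ 2) * (t - tm) * (t - tp) := by
      have e1 : 0 < 1 - t^2 := by nlinarith
      have e2 : t - tm < 0 := by linarith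
      have e3 : t - tp < 0 := by linarith
      nlinarith [mul_pos_of_neg_of_neg e2 e3]
    have hsQ : 0 < Real.sqrt ((1 - t ^ 2) * (t - tm) * (t - tp)) := Real.sqrt_pos.2 hQ
    have hsq2 : Real.sqrt ((1 - t ^ 2) * (t - tm) * (t - tp)) ^ 2
        = (1 - t ^ 2) * (t - tm) * (t - tp) := Real.sq_sqrt hQ.le
    have hden2 : 0 < 1 + tm*tp - (tm+tp)*t := by nlinarith [h1t, hp, haid]
    have ha_ne : a ≠ 0 := ne_of_lt ha0
    have h1t' : (1 - a*t) ≠ 0 := h1t.ne'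
    have hA : Real.sqrt (Wf a t * ((tm+tp) - Wf a t))
        = (-a)*Real.sqrt ((1 - t ^ 2) * (t - tm) * (t - tp))/(1-a*t) := by
      rw [show Wf a t * ((tm+tp) - Wf a t)
          = ((-a)*Real.sqrt ((1 - t ^ 2) * (t - tm) * (t - tp))/(1-a*t))^2 from ?_]
      · exact Real.sqrt_sq (div_nonneg (mul_nonneg (by linarith) (Real.sqrt_nonneg _)) h1t.le)
      · rw [div_pow, mul_pow, hsq2]
        simp only [Wf]
        rw [ha_def]
        field_simp
        ring
    have hB : Dlf a (Wf a t) = (a*t^2-2*t+a)/(1-a*t) := by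
      simp only [Dlf]
      rw [show (Wf a t)^2 - 4*(Wf a t)/a + 4 = ((a*t^2-2*t+a)/(1-a*t))^2 from ?_]
      · exact Real.sqrt_sq (div_nonneg (by linarith) h1t.le)
      · simp only [Wf]
        field_simp
        ring
    have hC : Wf a t - (a*t^2-2*t+a)/(1-a*t) = 2*t := by
      simp only [Wf]
      field_simp
      ring
    have hD : |Wdf a t| = (-a)*(a*t^2-2*t+a)/(1-a*t)^2 := by
      simp only [Wdf]
      rw [abs_of_neg (div_neg_of_neg_of_pos (mul_neg_of_pos_of_neg (neg_pos.2 ha0) hq) (pow_pos h1t 2))]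
      ring
    rw [hD]
    simp only [g2f]
    rw [hB, hA, hC]
    have hq2 : (0:ℝ) < a*t^2-2*t+a := by linarith
    field_simp [hsQ.ne', hq2.ne', ne_of_gt (show (0:ℝ) < t * (t * a - 2) + a by linarith), ne_of_gt (show (0:ℝ) < 1 - t * a by linarith)]
  -- the cosine substitution
  have hψd : ∀ θ : ℝ, HasDerivAt (Psif (tm+tp)) ((tm+tp)*Real.sin θ/2) θ := by
    intro θ
    have h₁ := (((Real.hasDerivAt_cos θ).const_sub 1).const_mul (tm+tp)).div_const 2
    show HasDerivAt (fun θ => (tm+tp)*(1-Real.cos θ)/2) _ θ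
    refine h₁.congr_deriv ?_
    ring
  have hψ0 : Psif (tm+tp) 0 = 0 := by simp [Psif]
  have hψπ : Psif (tm+tp) π = tm+tp := by
    simp [Psif, Real.cos_pi]
    ring
  have hψcont : ContinuousOn (Psif (tm+tp)) (Set.Icc 0 π) :=
    fun θ _ => (hψd θ).continuousAt.continuousWithinAt
  have hψanti : StrictAntiOn (Psif (tm+tp)) (Set.Icc 0 π) := by
    apply strictAntiOn_of_deriv_neg (convex_Icc _ _) hψcont
    intro θ hθ
    rw [interior_Icc] at hθ
    rw [(hψd θ).deriv]
    have hsin := Real.sin_pos_of_pos_of_lt_pi hθ.1 hθ.2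
    have : (tm+tp)*Real.sin θ < 0 := mul_neg_of_neg_of_pos h4 hsin
    linarith
  have himg3 : Psif (tm+tp) '' Set.Ioo 0 π = Set.Ioo (tm+tp) 0 := by
    apply Set.Subset.antisymm
    · rintro y ⟨θ, hθ, rfl⟩
      constructor
      · have h' := hψanti ⟨hθ.1.le, hθ.2.le⟩ ⟨Real.pi_pos.le, le_refl π⟩ hθ.2
        rwa [hψπ] at h'
      · have h' := hψanti ⟨le_refl 0, Real.pi_pos.le⟩ ⟨hθ.1.le, hθ.2.le⟩ hθ.1
        rwa [hψ0] at h'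
    · have := intermediate_value_Ioo' Real.pi_pos.le hψcont
      rw [hψ0, hψπ] at this
      exact this
  have hinj3 : Set.InjOn (Psif (tm+tp)) (Set.Ioo 0 π) :=
    hψanti.injOn.mono Set.Ioo_subset_Icc_self
  have hpt3 : ∀ θ ∈ Set.Ioo 0 π,
      |(tm+tp)*Real.sin θ/2| • h0f (tm+tp) (Psif (tm+tp) θ) = 1 := by
    rintro θ ⟨hθ1, hθ2⟩
    have hsin : 0 < Real.sin θ := Real.sin_pos_of_pos_of_lt_pi hθ1 hθ2
    have hne : (tm+tp)*Real.sin θ/2 ≠ 0 := by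
      have := mul_neg_of_neg_of_pos h4 hsin
      intro hc; nlinarith
    have hpy := Real.sin_sq_add_cos_sq θ
    have hid : Psif (tm+tp) θ * ((tm+tp) - Psif (tm+tp) θ) = ((tm+tp)*Real.sin θ/2)^2 := by
      simp only [Psif]
      linear_combination (-(tm+tp)^2/4)*hpy
    simp only [h0f, smul_eq_mul]
    rw [hid, Real.sqrt_sq_eq_abs, mul_one_div, div_self (abs_ne_zero.2 hne)]
  have hIh : ∫ w in Set.Ioo (tm+tp) 0, h0f (tm+tp) w = π := by
    rw [← himg3, integral_image_eq_integral_abs_deriv_smul measurableSet_Ioo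
      (fun θ _ => (hψd θ).hasDerivWithinAt) hinj3]
    rw [setIntegral_congr_fun measurableSet_Ioo (fun θ hθ => hpt3 θ hθ)]
    rw [setIntegral_const]
    simp [Real.volume_Ioo, ENNReal.toReal_ofReal Real.pi_pos.le, Real.pi_pos.le]
  have hInth : IntegrableOn (h0f (tm+tp)) (Set.Ioo (tm+tp) 0) := by
    rw [← himg3, integrableOn_image_iff_integrableOn_abs_deriv_smul measurableSet_Ioo
      (fun θ _ => (hψd θ).hasDerivWithinAt) hinj3]
    have hone : IntegrableOn (fun _ : ℝ => (1:ℝ)) (Set.Ioo 0 π) := by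
      apply (integrableOn_const_iff (by simp)).2
      right
      rw [Real.volume_Ioo]
      exact ENNReal.ofReal_lt_top
    exact hone.congr_fun (fun θ hθ => (hpt3 θ hθ).symm) measurableSet_Ioo
  have hsplit := tailpart tm tp a h1 h2 h3 h4 hp haid ha0 ha1 hInth hIh
  rw [integral_of_le (by linarith : tp ≤ (1:ℝ)), integral_of_le (by linarith : (-1:ℝ) ≤ tm),
    integral_Ioc_eq_integral_Ioo, integral_Ioc_eq_integral_Ioo, hJm, hJp, hsplit]
  ring

/-- Equation (eq2): for real `u > √2 + 1` with
`t₋ = −(u⁴+2u³−6u−1)/((u²+1)(u²+2u−1))` and `t₊ = (u⁴−6u³+2u−1)/((u²+1)(u²+2u−1))`,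
one has `J₋ − J₊ = 4`. -/
theorem Jminus_sub_Jplus_eq_four (u tm tp : ℝ) (hu : Real.sqrt 2 + 1 < u)
    (htm : tm = -(u ^ 4 + 2 * u ^ 3 - 6 * u - 1) / ((u ^ 2 + 1) * (u ^ 2 + 2 * u - 1)))
    (htp : tp = (u ^ 4 - 6 * u ^ 3 + 2 * u - 1) / ((u ^ 2 + 1) * (u ^ 2 + 2 * u - 1))) :
    (4 / π) * (∫ t in tp..(1:ℝ),
        t / Real.sqrt ((1 - t ^ 2) * (t - tm) * (t - tp))) -
    (4 / π) * (∫ t in (-1:ℝ)..tm,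
        t / Real.sqrt ((1 - t ^ 2) * (t - tm) * (t - tp))) = 4 := by
  have hs2 : (1:ℝ) < Real.sqrt 2 := by
    rw [show (1:ℝ) = Real.sqrt 1 by simp]
    exact Real.sqrt_lt_sqrt (by norm_num) (by norm_num)
  have hu2 : (2:ℝ) < u := by linarith
  have hsq : Real.sqrt 2 ^ 2 = 2 := Real.sq_sqrt (by norm_num)
  have huu : 0 < u^2 - 2*u - 1 := by nlinarith [Real.sqrt_nonneg 2]
  have hD : 0 < (u^2+1)*(u^2+2*u-1) := by nlinarith
  have e1 : tm + 1 = 8*u/((u^2+1)*(u^2+2*u-1)) := by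
    rw [htm, div_add_one hD.ne', div_left_inj' hD.ne']; ring
  have e2 : 1 - tp = 8*u^3/((u^2+1)*(u^2+2*u-1)) := by
    rw [htp, one_sub_div hD.ne', div_left_inj' hD.ne']; ring
  have e3 : tp - tm = 2*(u^2+1)*(u^2-2*u-1)/((u^2+1)*(u^2+2*u-1)) := by
    rw [htm, htp]; field_simp [ne_of_gt (by nlinarith : (0:ℝ) < u^2+2*u-1)]; ring
  have e4 : tm + tp = -(8*u*(u^2-1))/((u^2+1)*(u^2+2*u-1)) := by
    rw [htm, htp]; field_simp [ne_of_gt (by nlinarith : (0:ℝ) < u^2+2*u-1)]; ring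
  have h1 : -1 < tm := by nlinarith [div_pos (by nlinarith : (0:ℝ) < 8*u) hD]
  have h3 : tp < 1 := by nlinarith [div_pos (by nlinarith : (0:ℝ) < 8*u^3) hD]
  have h2 : tm < tp := by nlinarith [div_pos (by nlinarith : (0:ℝ) < 2*(u^2+1)*(u^2-2*u-1)) hD]
  have h4 : tm + tp < 0 := by
    rw [e4, neg_div, neg_lt_zero]
    exact div_pos (by nlinarith : (0:ℝ) < 8*u*(u^2-1)) hD
  have hk := key tm tp h1 h2 h3 h4
  have hπ : (π:ℝ) ≠ 0 := Real.pi_ne_zero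
  rw [← mul_sub, hk]
  field_simp
end

section
/- Let u > √2 + 1 be real. Set k = 16u(u² − 1)/(u² + 1)², t₋ = −(u⁴ + 2u³ − 6u − 1)/((u² + 1)(u² + 2u − 1)), t₊ = (u⁴ − 6u³ + 2u − 1)/((u² + 1)(u² + 2u − 1)). Define K = (8/π) ∫_{1−k/2}^{1} dT / √((1 − T²)(T + k/2 − 1)(T + k/2 + 1)) and I = (4/π) ∫_{t₊}^{1} dt / √((1 − t²)(t − t₋)(t − t₊)). Then K = (2(u² + 1)/(u² + 2u − 1)) · I. -/
open Real intervalIntegral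

set_option maxHeartbeats 1000000 in
private lemma K_aux_point (u k tm tp x : ℝ)
    (hk : k = 16 * u * (u ^ 2 - 1) / (u ^ 2 + 1) ^ 2)
    (htm : tm = -(u ^ 4 + 2 * u ^ 3 - 6 * u - 1) / ((u ^ 2 + 1) * (u ^ 2 + 2 * u - 1)))
    (htp : tp = (u ^ 4 - 6 * u ^ 3 + 2 * u - 1) / ((u ^ 2 + 1) * (u ^ 2 + 2 * u - 1)))
    (hAne : ((u:ℝ) ^ 2 + 1) ≠ 0) (hBne : ((u:ℝ) ^ 2 + 2 * u - 1) ≠ 0)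
    (hA : (0:ℝ) < u ^ 2 + 1) (hB : (0:ℝ) < u ^ 2 + 2 * u - 1)
    (den : ℝ → ℝ)
    (hden_def : den = fun t => u^4 + 2*u^3 + 2*u^2 - 2*u + 1 + (u ^ 2 + 1) * (u ^ 2 + 2 * u - 1) * t)
    (f : ℝ → ℝ) (hf_def : f = fun t => 1 + (u ^ 2 + 2 * u - 1) ^ 2 * (t ^ 2 - 1) / den t)
    (fd : ℝ → ℝ) (hfd_def : fd = fun t =>
      (u ^ 2 + 2 * u - 1) ^ 2 * (((u ^ 2 + 1) * t + (u ^ 2 + 2 * u - 1)) *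
        ((u ^ 2 + 2 * u - 1) * t + (u ^ 2 + 1))) / (den t) ^ 2)
    (hdx : 0 < den x) (hfdx : 0 < fd x)
    (hP : 0 < (1 - x ^ 2) * (x - tm) * (x - tp)) :
    |fd x| * (1 / Real.sqrt ((1 - (f x) ^ 2) * (f x + k / 2 - 1) * (f x + k / 2 + 1))) =
      (u ^ 2 + 1) / (u ^ 2 + 2 * u - 1) *
        (1 / Real.sqrt ((1 - x ^ 2) * (x - tm) * (x - tp))) := by
  have hdxne : den x ≠ 0 := hdx.ne'
  have hBne' : u * (u + 2) - 1 ≠ 0 := by convert hBne using 1; ring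
  have e1 : 1 - f x = (u ^ 2 + 2 * u - 1) ^ 2 * (1 - x ^ 2) / den x := by
    simp only [hf_def]
    field_simp
    ring
  have e2 : 1 + f x = ((u ^ 2 + 2 * u - 1) * x + (u ^ 2 + 1)) ^ 2 / den x := by
    simp only [hf_def]
    have hdx' : u^4 + 2*u^3 + 2*u^2 - 2*u + 1 + (u ^ 2 + 1) * (u ^ 2 + 2 * u - 1) * x ≠ 0 := by
      simp only [hden_def] at hdxne; exact hdxne
    field_simp
    simp only [hden_def]
    ring
  have hdx' : u^4 + 2*u^3 + 2*u^2 - 2*u + 1 + (u ^ 2 + 1) * (u ^ 2 + 2 * u - 1) * x ≠ 0 := by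
    simp only [hden_def] at hdxne; exact hdxne
  have e3 : f x + k / 2 - 1 = (u ^ 2 + 1) ^ 2 * (u ^ 2 + 2 * u - 1) ^ 2 * (x - tm) * (x - tp) /
      ((u ^ 2 + 1) ^ 2 * den x) := by
    simp only [hf_def]
    rw [hk, htm, htp]
    field_simp
    simp only [hden_def]
    ring
  have e4 : f x + k / 2 + 1 = (u ^ 2 + 2 * u - 1) ^ 2 * ((u ^ 2 + 1) * x + (u ^ 2 + 2 * u - 1)) ^ 2 /
      ((u ^ 2 + 1) ^ 2 * den x) := by
    simp only [hf_def]
    rw [hk]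
    field_simp
    simp only [hden_def]
    ring
  have hQid : (1 - (f x) ^ 2) * (f x + k / 2 - 1) * (f x + k / 2 + 1) =
      ((u ^ 2 + 2 * u - 1) / (u ^ 2 + 1) * fd x) ^ 2 *
        ((1 - x ^ 2) * (x - tm) * (x - tp)) := by
    rw [show 1 - (f x) ^ 2 = (1 - f x) * (1 + f x) by ring, e1, e2, e3, e4]
    simp only [hfd_def]
    field_simp
  have hsq : Real.sqrt ((1 - (f x) ^ 2) * (f x + k / 2 - 1) * (f x + k / 2 + 1)) =
      (u ^ 2 + 2 * u - 1) / (u ^ 2 + 1) * fd x *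
        Real.sqrt ((1 - x ^ 2) * (x - tm) * (x - tp)) := by
    rw [hQid, Real.sqrt_mul (sq_nonneg _), Real.sqrt_sq (by positivity)]
  have hsP : 0 < Real.sqrt ((1 - x ^ 2) * (x - tm) * (x - tp)) := Real.sqrt_pos.mpr hP
  rw [abs_of_pos hfdx, hsq]
  rw [mul_one_div, mul_one_div]
  rw [div_eq_div_iff (by positivity) (by positivity)]
  field_simp


set_option maxHeartbeats 1000000 in
/-- Equation (eq4): for real `u > √2 + 1`, with `k = 16u(u²−1)/(u²+1)²` and `t₋, t₊` as in
the paper, `K = (2(u²+1)/(u²+2u−1)) I`. -/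
theorem K_eq_I_relation (u k tm tp : ℝ) (hu : Real.sqrt 2 + 1 < u)
    (hk : k = 16 * u * (u ^ 2 - 1) / (u ^ 2 + 1) ^ 2)
    (htm : tm = -(u ^ 4 + 2 * u ^ 3 - 6 * u - 1) / ((u ^ 2 + 1) * (u ^ 2 + 2 * u - 1)))
    (htp : tp = (u ^ 4 - 6 * u ^ 3 + 2 * u - 1) / ((u ^ 2 + 1) * (u ^ 2 + 2 * u - 1))) :
    (8 / π) * (∫ T in (1 - k / 2)..(1:ℝ),
        1 / Real.sqrt ((1 - T ^ 2) * (T + k / 2 - 1) * (T + k / 2 + 1))) =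
    (2 * (u ^ 2 + 1) / (u ^ 2 + 2 * u - 1)) *
      ((4 / π) * ∫ t in tp..(1:ℝ),
        1 / Real.sqrt ((1 - t ^ 2) * (t - tm) * (t - tp))) := by
  -- basic positivity facts
  have hs2 : Real.sqrt 2 ^ 2 = 2 := Real.sq_sqrt (by norm_num)
  have hs2pos : 0 < Real.sqrt 2 := Real.sqrt_pos.mpr (by norm_num)
  have hu1 : 1 < u := by nlinarith
  have hu0 : 0 < u := by linarith
  have hum : 0 < u - 1 := by linarith
  have hsu : Real.sqrt 2 < u - 1 := by linarith
  have hkey : 0 < u ^ 2 - 2 * u - 1 := by nlinarith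
  have hA : (0:ℝ) < u ^ 2 + 1 := by positivity
  have hB : (0:ℝ) < u ^ 2 + 2 * u - 1 := by nlinarith
  have hAB : (0:ℝ) < (u ^ 2 + 1) * (u ^ 2 + 2 * u - 1) := mul_pos hA hB
  have hABne : ((u:ℝ) ^ 2 + 1) * (u ^ 2 + 2 * u - 1) ≠ 0 := ne_of_gt hAB
  have hAne : ((u:ℝ) ^ 2 + 1) ≠ 0 := ne_of_gt hA
  have hBne : ((u:ℝ) ^ 2 + 2 * u - 1) ≠ 0 := ne_of_gt hB
  have hBne' : u * (u + 2) - 1 ≠ 0 := by convert hBne using 1; ring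
  -- ordering facts
  have htp1 : tp < 1 := by
    rw [htp, div_lt_one hAB]; nlinarith
  have htpm1 : -1 < tp := by
    rw [htp, lt_div_iff₀ hAB]; nlinarith
  have htmtp : tm < tp := by
    rw [htp, htm, div_lt_div_iff₀ hAB hAB]
    nlinarith [mul_pos (mul_pos hkey hA) hAB]
  have hk0 : 0 < k := by
    rw [hk]; apply div_pos; nlinarith; positivity
  -- the substitution map and its derivative
  set den : ℝ → ℝ := fun t => u^4 + 2*u^3 + 2*u^2 - 2*u + 1 + (u ^ 2 + 1) * (u ^ 2 + 2 * u - 1) * t with hden_def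
  set f : ℝ → ℝ := fun t => 1 + (u ^ 2 + 2 * u - 1) ^ 2 * (t ^ 2 - 1) / den t with hf_def
  set fd : ℝ → ℝ := fun t =>
    (u ^ 2 + 2 * u - 1) ^ 2 * (((u ^ 2 + 1) * t + (u ^ 2 + 2 * u - 1)) *
      ((u ^ 2 + 2 * u - 1) * t + (u ^ 2 + 1))) / (den t) ^ 2 with hfd_def
  have hABtp : (u ^ 2 + 1) * (u ^ 2 + 2 * u - 1) * tp = u ^ 4 - 6 * u ^ 3 + 2 * u - 1 := by
    rw [htp, mul_div_assoc']; exact mul_div_cancel_left₀ _ hABne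
  have hden_pos : ∀ t ∈ Set.Icc tp (1:ℝ), 0 < den t := by
    intro t ht
    have h1 := mul_le_mul_of_nonneg_left ht.1 hAB.le
    simp only [hden_def]
    nlinarith [hABtp]
  have hfac1 : ∀ t ∈ Set.Icc tp (1:ℝ), 0 < (u ^ 2 + 1) * t + (u ^ 2 + 2 * u - 1) := by
    intro t ht
    have h1 := mul_le_mul_of_nonneg_left ht.1 hA.le
    have h2 : (u ^ 2 + 1) * tp = (u ^ 4 - 6 * u ^ 3 + 2 * u - 1) / (u ^ 2 + 2 * u - 1) := by
      rw [htp]; field_simp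
    rw [h2] at h1
    have h3 : (0:ℝ) < (u ^ 4 - 6 * u ^ 3 + 2 * u - 1) / (u ^ 2 + 2 * u - 1) + (u ^ 2 + 2 * u - 1) := by
      rw [div_add' _ _ _ hBne]
      apply div_pos _ hB
      nlinarith
    linarith
  have hfac2 : ∀ t ∈ Set.Icc tp (1:ℝ), 0 < (u ^ 2 + 2 * u - 1) * t + (u ^ 2 + 1) := by
    intro t ht
    have h1 := mul_le_mul_of_nonneg_left ht.1 hB.le
    have h2 : (u ^ 2 + 2 * u - 1) * tp = (u ^ 4 - 6 * u ^ 3 + 2 * u - 1) / (u ^ 2 + 1) := by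
      rw [htp]; field_simp
    rw [h2] at h1
    have h3 : (0:ℝ) < (u ^ 4 - 6 * u ^ 3 + 2 * u - 1) / (u ^ 2 + 1) + (u ^ 2 + 1) := by
      rw [div_add' _ _ _ hAne]
      apply div_pos _ hA
      nlinarith
    linarith
  have hfd_pos : ∀ t ∈ Set.Icc tp (1:ℝ), 0 < fd t := by
    intro t ht
    have h1 := hden_pos t ht
    have h2 := hfac1 t ht
    have h3 := hfac2 t ht
    simp only [hfd_def]
    positivity
  -- derivative
  have hd : ∀ x : ℝ, den x ≠ 0 → HasDerivAt f (fd x) x := by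
    intro x hx
    have h1 : HasDerivAt (fun t : ℝ => (u ^ 2 + 2 * u - 1) ^ 2 * (t ^ 2 - 1))
        ((u ^ 2 + 2 * u - 1) ^ 2 * (2 * x)) x := by
      simpa using (((hasDerivAt_pow 2 x).sub_const 1).const_mul ((u ^ 2 + 2 * u - 1) ^ 2))
    have h2 : HasDerivAt den ((u ^ 2 + 1) * (u ^ 2 + 2 * u - 1)) x := by
      simp only [hden_def]
      simpa using ((hasDerivAt_id x).const_mul ((u ^ 2 + 1) * (u ^ 2 + 2 * u - 1))).const_add
        (u^4 + 2*u^3 + 2*u^2 - 2*u + 1)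
    have h3 := (h1.div h2 hx).const_add 1
    refine (h3 : HasDerivAt f _ x).congr_deriv ?_
    simp only [hfd_def] at *
    rw [div_left_inj' (pow_ne_zero 2 hx)]
    simp only [hden_def]
    ring
  -- values at endpoints
  have hdtp : den tp = 2 * u ^ 2 * (u - 1) ^ 2 := by
    simp only [hden_def]; rw [hABtp]; ring
  have h2ne : (2:ℝ) * u ^ 2 * (u - 1) ^ 2 ≠ 0 := by positivity
  have hftp : f tp = 1 - k / 2 := by
    simp only [hf_def]
    rw [hdtp, hk, htp]
    field_simp
    ring
  have hf1 : f 1 = 1 := by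
    simp only [hf_def]; norm_num
  -- continuity and monotonicity on [tp, 1]
  have hcont : ContinuousOn f (Set.Icc tp 1) := fun x hx =>
    (hd x (hden_pos x hx).ne').continuousAt.continuousWithinAt
  have hmono : StrictMonoOn f (Set.Icc tp 1) := by
    apply strictMonoOn_of_deriv_pos (convex_Icc _ _) hcont
    intro x hx
    rw [interior_Icc] at hx
    have hxI : x ∈ Set.Icc tp 1 := Set.Ioo_subset_Icc_self hx
    rw [(hd x (hden_pos x hxI).ne').deriv]
    exact hfd_pos x hxI
  -- image of the open interval
  have himg : f '' Set.Ioo tp 1 = Set.Ioo (1 - k / 2) 1 := by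
    apply Set.Subset.antisymm
    · rintro y ⟨x, hx, rfl⟩
      constructor
      · rw [← hftp]
        exact hmono (Set.left_mem_Icc.2 htp1.le) (Set.Ioo_subset_Icc_self hx) hx.1
      · rw [← hf1]
        exact hmono (Set.Ioo_subset_Icc_self hx) (Set.right_mem_Icc.2 htp1.le) hx.2
    · have h := intermediate_value_Ioo htp1.le hcont
      rwa [hftp, hf1] at h
  -- the key change of variables
  have key : (∫ T in (1 - k / 2)..(1:ℝ),
        1 / Real.sqrt ((1 - T ^ 2) * (T + k / 2 - 1) * (T + k / 2 + 1))) =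
      (u ^ 2 + 1) / (u ^ 2 + 2 * u - 1) *
        ∫ t in tp..(1:ℝ), 1 / Real.sqrt ((1 - t ^ 2) * (t - tm) * (t - tp)) := by
    rw [intervalIntegral.integral_of_le (by linarith : 1 - k / 2 ≤ 1),
        intervalIntegral.integral_of_le htp1.le,
        MeasureTheory.integral_Ioc_eq_integral_Ioo, MeasureTheory.integral_Ioc_eq_integral_Ioo,
        ← himg,
        MeasureTheory.integral_image_eq_integral_abs_deriv_smul measurableSet_Ioo
          (fun x hx => (hd x (hden_pos x (Set.Ioo_subset_Icc_self hx)).ne').hasDerivWithinAt)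
          (hmono.injOn.mono Set.Ioo_subset_Icc_self)]
    rw [MeasureTheory.setIntegral_congr_fun measurableSet_Ioo
        (g := fun t => (u ^ 2 + 1) / (u ^ 2 + 2 * u - 1) *
          (1 / Real.sqrt ((1 - t ^ 2) * (t - tm) * (t - tp)))) ?_]
    · rw [MeasureTheory.integral_const_mul]
    · intro x hx
      have hxI : x ∈ Set.Icc tp 1 := Set.Ioo_subset_Icc_self hx
      have hdx : 0 < den x := hden_pos x hxI
      have hfdx : 0 < fd x := hfd_pos x hxI
      have hP : 0 < (1 - x ^ 2) * (x - tm) * (x - tp) := by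
        have h1 : 0 < 1 - x ^ 2 := by nlinarith [hx.1, hx.2, htpm1]
        have h2 : 0 < x - tm := by linarith [hx.1, htmtp]
        have h3 : 0 < x - tp := by linarith [hx.1]
        positivity
      simp only [smul_eq_mul]
      exact K_aux_point u k tm tp x hk htm htp hAne hBne hA hB den hden_def f hf_def fd hfd_def
        hdx hfdx hP
  rw [key]
  ring
end

section
/- Let a, c be real numbers with c ≠ 0 such that the Weierstrass curve W : Y² = X³ + (c²/4 − 1 − a²)X² + a²X over ℝ is nonsingular (its discriminant is nonzero). Then P = (1, c/2) and Q = (a², c a²/2) are points on W, and under the elliptic curve group law: P + Q = (0, 0), 2P = ( ((a² − 1)/c)², (a² − 1)(2a⁴ − a²c² − 4a² − c² + 2)/(2c³) ), and 2Q = ( ((a² − 1)/c)², −(a² − 1)(2a⁴ − a²c² − 4a² − c² + 2)/(2c³) ). -/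
open WeierstrassCurve

private lemma some_congr {F : Type*} [Field F] {W : Affine F} {x₁ y₁ x₂ y₂ : F}
    (hx : x₁ = x₂) (hy : y₁ = y₂) (h₁ : W.Nonsingular x₁ y₁) (h₂ : W.Nonsingular x₂ y₂) :
    Affine.Point.some _ _ h₁ = Affine.Point.some _ _ h₂ := by
  subst hx hy; rfl

/-- On the Weierstrass curve `W : Y² = X³ + (c²/4 − 1 − a²)X² + a²X` (assumed nonsingular,
i.e. with nonzero discriminant), `P = (1, c/2)` and `Q = (a², ca²/2)` are points, and
`P + Q = (0, 0)`, `2P = (((a²−1)/c)², (a²−1)(2a⁴−a²c²−4a²−c²+2)/(2c³))`, and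
`2Q` is the same point with opposite `Y`-coordinate. -/
theorem points_P_Q_sum_and_doubling (a c : ℝ) (hc : c ≠ 0) (W : Affine ℝ)
    (hW : W = { a₁ := 0, a₂ := c ^ 2 / 4 - 1 - a ^ 2, a₃ := 0, a₄ := a ^ 2, a₆ := 0 })
    (hΔ : W.Δ ≠ 0) :
    ∃ (hP : W.Nonsingular 1 (c / 2))
      (hQ : W.Nonsingular (a ^ 2) (c * a ^ 2 / 2))
      (h00 : W.Nonsingular 0 0)
      (h2P : W.Nonsingular (((a ^ 2 - 1) / c) ^ 2)
        ((a ^ 2 - 1) * (2 * a ^ 4 - a ^ 2 * c ^ 2 - 4 * a ^ 2 - c ^ 2 + 2) / (2 * c ^ 3)))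
      (h2Q : W.Nonsingular (((a ^ 2 - 1) / c) ^ 2)
        (-((a ^ 2 - 1) * (2 * a ^ 4 - a ^ 2 * c ^ 2 - 4 * a ^ 2 - c ^ 2 + 2) / (2 * c ^ 3)))),
      Affine.Point.some _ _ hP + Affine.Point.some _ _ hQ = Affine.Point.some _ _ h00 ∧
      2 • Affine.Point.some _ _ hP = Affine.Point.some _ _ h2P ∧
      2 • Affine.Point.some _ _ hQ = Affine.Point.some _ _ h2Q := by
  subst hW
  set W : Affine ℝ :=
    { a₁ := 0, a₂ := c ^ 2 / 4 - 1 - a ^ 2, a₃ := 0, a₄ := a ^ 2, a₆ := 0 } with hWdef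
  have ha : a ≠ 0 := by
    intro h
    apply hΔ
    simp [hWdef, WeierstrassCurve.Δ, WeierstrassCurve.b₂, WeierstrassCurve.b₄,
      WeierstrassCurve.b₆, WeierstrassCurve.b₈, h]
  have hP : W.Nonsingular 1 (c / 2) := by
    apply (W.equation_iff_nonsingular_of_Δ_ne_zero hΔ).mp
    rw [Affine.equation_iff]
    simp [hWdef]; ring
  have hQ : W.Nonsingular (a ^ 2) (c * a ^ 2 / 2) := by
    apply (W.equation_iff_nonsingular_of_Δ_ne_zero hΔ).mp
    rw [Affine.equation_iff]
    simp [hWdef]; ring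
  have h00 : W.Nonsingular 0 0 := by
    apply (W.equation_iff_nonsingular_of_Δ_ne_zero hΔ).mp
    rw [Affine.equation_iff]
    simp [hWdef]
  have h2P : W.Nonsingular (((a ^ 2 - 1) / c) ^ 2)
      ((a ^ 2 - 1) * (2 * a ^ 4 - a ^ 2 * c ^ 2 - 4 * a ^ 2 - c ^ 2 + 2) / (2 * c ^ 3)) := by
    apply (W.equation_iff_nonsingular_of_Δ_ne_zero hΔ).mp
    rw [Affine.equation_iff]
    simp only [hWdef]
    field_simp
    ring
  have h2Q : W.Nonsingular (((a ^ 2 - 1) / c) ^ 2)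
      (-((a ^ 2 - 1) * (2 * a ^ 4 - a ^ 2 * c ^ 2 - 4 * a ^ 2 - c ^ 2 + 2) / (2 * c ^ 3))) := by
    apply (W.equation_iff_nonsingular_of_Δ_ne_zero hΔ).mp
    rw [Affine.equation_iff]
    simp only [hWdef]
    field_simp
    ring
  refine ⟨hP, hQ, h00, h2P, h2Q, ?_, ?_, ?_⟩
  · -- P + Q = (0,0)
    by_cases h1 : (1 : ℝ) = a ^ 2
    · have hy : c / 2 ≠ W.negY (a ^ 2) (c * a ^ 2 / 2) := by
        simp [Affine.negY, hWdef, ← h1]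
        intro h; exact hc (by linarith)
      rw [Affine.Point.add_of_Y_ne hy]
      apply some_congr
      · rw [Affine.slope_of_Y_ne h1 hy]
        simp [hWdef, ← h1]
        field_simp
        ring
      · rw [Affine.slope_of_Y_ne h1 hy]
        simp [hWdef, Affine.negY, Affine.addY, Affine.negAddY, Affine.addX, ← h1]
        field_simp
        ring
    · have hx : (1 : ℝ) ≠ a ^ 2 := h1
      rw [Affine.Point.add_of_X_ne hx]
      have hs : W.slope 1 (a ^ 2) (c / 2) (c * a ^ 2 / 2) = c / 2 := by
        rw [Affine.slope_of_X_ne hx]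
        rw [div_eq_iff (sub_ne_zero.mpr hx)]
        ring
      apply some_congr
      · simp only [Affine.addX]; rw [hs]; simp [hWdef]; ring
      · simp only [Affine.addY, Affine.negAddY, Affine.addX]; rw [hs]; simp [hWdef, Affine.negY]; ring
  · -- 2P
    rw [two_smul]
    have hy : c / 2 ≠ W.negY 1 (c / 2) := by
      simp [Affine.negY, hWdef]
      intro h; exact hc (by linarith)
    rw [Affine.Point.add_self_of_Y_ne hy]
    have hs : W.slope 1 1 (c / 2) (c / 2) = (c ^ 2 / 2 + 1 - a ^ 2) / c := by
      rw [Affine.slope_of_Y_ne rfl hy]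
      simp [hWdef]
      field_simp
      ring
    apply some_congr
    · simp only [Affine.addX]; rw [hs]; simp only [hWdef]
      field_simp
      ring
    · simp only [Affine.addY, Affine.negAddY, Affine.addX, Affine.negY]; rw [hs]; simp only [hWdef]
      field_simp
      ring
  · -- 2Q
    rw [two_smul]
    have ha2 : a ^ 2 ≠ 0 := pow_ne_zero 2 ha
    have hy : c * a ^ 2 / 2 ≠ W.negY (a ^ 2) (c * a ^ 2 / 2) := by
      simp [Affine.negY, hWdef]
      intro h
      rcases mul_eq_zero.mp (by linarith : c * a ^ 2 = 0) with h' | h'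
      exacts [hc h', ha2 h']
    rw [Affine.Point.add_self_of_Y_ne hy]
    have hs : W.slope (a ^ 2) (a ^ 2) (c * a ^ 2 / 2) (c * a ^ 2 / 2)
        = (a ^ 2 + c ^ 2 / 2 - 1) / c := by
      rw [Affine.slope_of_Y_ne rfl hy]
      simp [hWdef]
      field_simp
      ring
    apply some_congr
    · simp only [Affine.addX]; rw [hs]; simp only [hWdef]
      field_simp
      ring
    · simp only [Affine.addY, Affine.negAddY, Affine.addX, Affine.negY]; rw [hs]; simp only [hWdef]
      field_simp
      ring
end

section
/- Let c be a real number with c ≠ 0 such that the Weierstrass curve W : Y² = X³ + (c²/4 − 2)X² + X over ℝ is nonsingular (its discriminant is nonzero; equivalently c ∉ {0, 4, −4}). Then the point P = (1, c/2) on W has order exactly 4 in the group of points of W; in particular 2P = (0, 0). -/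
open WeierstrassCurve

/-- On the Weierstrass curve `W : Y² = X³ + (c²/4 − 2)X² + X` (the case `a = 1`), assumed
nonsingular, the point `P = (1, c/2)` has order exactly `4`; in particular `2P = (0, 0)`. -/
theorem point_P_has_order_four (c : ℝ) (hc : c ≠ 0) (W : Affine ℝ)
    (hW : W = { a₁ := 0, a₂ := c ^ 2 / 4 - 2, a₃ := 0, a₄ := 1, a₆ := 0 })
    (hΔ : W.Δ ≠ 0) :
    ∃ (hP : W.Nonsingular 1 (c / 2)) (h00 : W.Nonsingular 0 0),
      addOrderOf (Affine.Point.some _ _ hP) = 4 ∧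
      2 • Affine.Point.some _ _ hP = Affine.Point.some _ _ h00 := by
  subst hW
  set W : Affine ℝ := { a₁ := 0, a₂ := c ^ 2 / 4 - 2, a₃ := 0, a₄ := 1, a₆ := 0 } with hWdef
  have hP : W.Nonsingular 1 (c / 2) := by
    rw [Affine.nonsingular_iff, Affine.equation_iff]
    constructor
    · simp [hWdef]; ring
    · right
      simp [hWdef, Affine.negY]
      intro h
      exact hc (by linarith)
  have h00 : W.Nonsingular 0 0 := by
    rw [Affine.nonsingular_iff, Affine.equation_iff]
    constructor
    · simp [hWdef]
    · left; simp [hWdef]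
  have hy : (c / 2 : ℝ) ≠ W.negY 1 (c / 2) := by
    simp [hWdef, Affine.negY]
    intro h
    exact hc (by linarith)
  have hslope : W.slope 1 1 (c / 2) (c / 2) = c / 2 := by
    rw [Affine.slope_of_Y_ne rfl hy]
    simp [hWdef, Affine.negY]
    field_simp
    ring
  have hx : W.addX 1 1 (W.slope 1 1 (c / 2) (c / 2)) = 0 := by
    rw [hslope]
    simp [Affine.addX, hWdef]
    ring
  have hy3 : W.addY 1 1 (c / 2) (W.slope 1 1 (c / 2) (c / 2)) = 0 := by
    rw [Affine.addY, Affine.negY, Affine.negAddY, hx, hslope]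
    simp [hWdef]
  have h2 : (2 : ℕ) • Affine.Point.some _ _ hP = Affine.Point.some _ _ h00 := by
    rw [two_nsmul, Affine.Point.add_self_of_Y_ne hy]
    simp_rw [hx, hy3]
  have h4 : (4 : ℕ) • Affine.Point.some _ _ hP = 0 := by
    have : (4 : ℕ) • Affine.Point.some _ _ hP = (2 : ℕ) • ((2:ℕ) • Affine.Point.some _ _ hP) := by
      rw [← mul_nsmul]
    rw [this, h2, two_nsmul]
    apply Affine.Point.add_self_of_Y_eq
    simp [hWdef, Affine.negY]
  refine ⟨hP, h00, ?_, h2⟩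
  haveI : Fact (Nat.Prime 2) := ⟨Nat.prime_two⟩
  have := addOrderOf_eq_prime_pow (p := 2) (n := 1) (x := Affine.Point.some _ _ hP)
    (by rw [pow_one, h2]; exact fun h => by simp at h) (by norm_num; exact h4)
  simpa using this
end

section
/- Let a > 1 be real and set c = √2(a² − 1)/√(a² + 1). Assume the Weierstrass curve W : Y² = X³ + (c²/4 − 1 − a²)X² + a²X over ℝ is nonsingular (its discriminant is nonzero). Then the points P = (1, c/2) and Q = (a², c a²/2) on W satisfy 2P = 2Q = ((a² + 1)/2, 0) under the elliptic curve group law. -/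
open WeierstrassCurve

/-- Remark 1, condition (c0): for real `a > 1` and `c = √2(a²−1)/√(a²+1)`, on the nonsingular
Weierstrass curve `W : Y² = X³ + (c²/4 − 1 − a²)X² + a²X` the points `P = (1, c/2)` and
`Q = (a², ca²/2)` satisfy `2P = 2Q = ((a²+1)/2, 0)`. -/
theorem doubling_P_Q_special (a c : ℝ) (ha : 1 < a)
    (hc : c = Real.sqrt 2 * (a ^ 2 - 1) / Real.sqrt (a ^ 2 + 1)) (W : Affine ℝ)
    (hW : W = { a₁ := 0, a₂ := c ^ 2 / 4 - 1 - a ^ 2, a₃ := 0, a₄ := a ^ 2, a₆ := 0 })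
    (hΔ : W.Δ ≠ 0) :
    ∃ (hP : W.Nonsingular 1 (c / 2))
      (hQ : W.Nonsingular (a ^ 2) (c * a ^ 2 / 2))
      (hR : W.Nonsingular ((a ^ 2 + 1) / 2) 0),
      2 • Affine.Point.some _ _ hP = Affine.Point.some _ _ hR ∧
      2 • Affine.Point.some _ _ hQ = Affine.Point.some _ _ hR := by
  subst hW
  have ha1 : (0:ℝ) < a ^ 2 - 1 := by nlinarith
  have ha2 : (0:ℝ) < a ^ 2 + 1 := by positivity
  have hcpos : 0 < c := by rw [hc]; positivity
  have hc0 : c ≠ 0 := ne_of_gt hcpos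
  have hc2 : c ^ 2 * (a ^ 2 + 1) = 2 * (a ^ 2 - 1) ^ 2 := by
    rw [hc, div_pow, mul_pow, Real.sq_sqrt (by norm_num : (0:ℝ) ≤ 2),
      Real.sq_sqrt ha2.le, div_mul_cancel₀]
    exact ne_of_gt ha2
  have hP : Affine.Nonsingular
      { a₁ := 0, a₂ := c ^ 2 / 4 - 1 - a ^ 2, a₃ := 0, a₄ := a ^ 2, a₆ := 0 } 1 (c / 2) := by
    refine (Affine.equation_iff_nonsingular_of_Δ_ne_zero hΔ).mp ?_
    rw [Affine.equation_iff]; ring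
  have hQ : Affine.Nonsingular
      { a₁ := 0, a₂ := c ^ 2 / 4 - 1 - a ^ 2, a₃ := 0, a₄ := a ^ 2, a₆ := 0 }
      (a ^ 2) (c * a ^ 2 / 2) := by
    refine (Affine.equation_iff_nonsingular_of_Δ_ne_zero hΔ).mp ?_
    rw [Affine.equation_iff]; ring
  have hR : Affine.Nonsingular
      { a₁ := 0, a₂ := c ^ 2 / 4 - 1 - a ^ 2, a₃ := 0, a₄ := a ^ 2, a₆ := 0 }
      ((a ^ 2 + 1) / 2) 0 := by
    refine (Affine.equation_iff_nonsingular_of_Δ_ne_zero hΔ).mp ?_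
    rw [Affine.equation_iff]
    field_simp
    linear_combination (-2 * (a ^ 2 + 1)) * hc2
  have key : ∀ {x₁ y₁ x₂ y₂ : ℝ}
      (h₁ : Affine.Nonsingular
        { a₁ := 0, a₂ := c ^ 2 / 4 - 1 - a ^ 2, a₃ := 0, a₄ := a ^ 2, a₆ := 0 } x₁ y₁)
      (h₂ : Affine.Nonsingular
        { a₁ := 0, a₂ := c ^ 2 / 4 - 1 - a ^ 2, a₃ := 0, a₄ := a ^ 2, a₆ := 0 } x₂ y₂),
      x₁ = x₂ → y₁ = y₂ → Affine.Point.some _ _ h₁ = Affine.Point.some _ _ h₂ := by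
    intro x₁ y₁ x₂ y₂ h₁ h₂ hx hy
    subst hx; subst hy; rfl
  refine ⟨hP, hQ, hR, ?_, ?_⟩
  · have hy : (c / 2 : ℝ) ≠ Affine.negY
        { a₁ := 0, a₂ := c ^ 2 / 4 - 1 - a ^ 2, a₃ := 0, a₄ := a ^ 2, a₆ := 0 } 1 (c / 2) := by
      simp only [Affine.negY]
      intro h; apply hc0; linarith
    rw [two_nsmul, Affine.Point.add_self_of_Y_ne hy]
    refine key _ _ ?_ ?_
    · rw [Affine.slope_of_Y_ne rfl hy]
      simp only [Affine.addX, Affine.negY]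
      simp only [mul_zero, zero_mul, sub_zero, mul_one, sub_neg_eq_add, add_halves]
      field_simp
      linear_combination (-16 : ℝ) * hc2
    · rw [Affine.slope_of_Y_ne rfl hy]
      simp only [Affine.addX, Affine.addY, Affine.negAddY, Affine.negY]
      simp only [mul_zero, zero_mul, sub_zero, mul_one, sub_neg_eq_add, add_halves]
      field_simp
      linear_combination (64 * (1 - a ^ 2)) * hc2
  · have hy : (c * a ^ 2 / 2 : ℝ) ≠ Affine.negY
        { a₁ := 0, a₂ := c ^ 2 / 4 - 1 - a ^ 2, a₃ := 0, a₄ := a ^ 2, a₆ := 0 }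
        (a ^ 2) (c * a ^ 2 / 2) := by
      simp only [Affine.negY]
      intro h
      have : c * a ^ 2 = 0 := by linarith
      exact hc0 ((mul_eq_zero.mp this).resolve_right (by positivity))
    rw [two_nsmul, Affine.Point.add_self_of_Y_ne hy]
    refine key _ _ ?_ ?_
    · rw [Affine.slope_of_Y_ne rfl hy]
      simp only [Affine.addX, Affine.negY]
      field_simp
      linear_combination (-64 * a ^ 4) * hc2
    · rw [Affine.slope_of_Y_ne rfl hy]
      simp only [Affine.addX, Affine.addY, Affine.negAddY, Affine.negY]
      field_simp
      linear_combination (512 * a ^ 6 * (a ^ 2 - 1)) * hc2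
end

section
/- Let a be a real number with a² ≠ 1 and set c = a² − 1. Assume the Weierstrass curve W : Y² = X³ + (c²/4 − 1 − a²)X² + a²X over ℝ is nonsingular (its discriminant is nonzero). Then the points P = (1, c/2) and Q = (a², c a²/2) on W satisfy 3P = O and 3Q = (0, 0) under the elliptic curve group law; in particular P has order 3. -/
open WeierstrassCurve

lemma some_eq_some_aux {F : Type*} [Field F] {W : Affine F} {x₁ y₁ x₂ y₂ : F}
    (h₁ : W.Nonsingular x₁ y₁) (h₂ : W.Nonsingular x₂ y₂) (hx : x₁ = x₂) (hy : y₁ = y₂) :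
    Affine.Point.some _ _ h₁ = Affine.Point.some _ _ h₂ := by subst hx; subst hy; rfl

/-- Remark 1, condition (torsion6): for real `a` with `a² ≠ 1` and `c = a² − 1`, on the
nonsingular Weierstrass curve `W : Y² = X³ + (c²/4 − 1 − a²)X² + a²X` the points
`P = (1, c/2)` and `Q = (a², ca²/2)` satisfy `3P = O` and `3Q = (0, 0)`; in particular
`P` has order `3`. -/
theorem torsion_three_special (a c : ℝ) (ha : a ^ 2 ≠ 1) (hc : c = a ^ 2 - 1)
    (W : Affine ℝ)
    (hW : W = { a₁ := 0, a₂ := c ^ 2 / 4 - 1 - a ^ 2, a₃ := 0, a₄ := a ^ 2, a₆ := 0 })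
    (hΔ : W.Δ ≠ 0) :
    ∃ (hP : W.Nonsingular 1 (c / 2))
      (hQ : W.Nonsingular (a ^ 2) (c * a ^ 2 / 2))
      (h00 : W.Nonsingular 0 0),
      3 • Affine.Point.some _ _ hP = 0 ∧
      3 • Affine.Point.some _ _ hQ = Affine.Point.some _ _ h00 ∧
      addOrderOf (Affine.Point.some _ _ hP) = 3 := by
  subst hc
  have hc0 : a ^ 2 - 1 ≠ 0 := sub_ne_zero.mpr ha
  have ha0 : a ≠ 0 := by
    intro h
    apply hΔ
    subst h hW
    simp [WeierstrassCurve.Δ, WeierstrassCurve.b₂, WeierstrassCurve.b₄,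
      WeierstrassCurve.b₆, WeierstrassCurve.b₈]
  have ha1 : W.a₁ = 0 := by rw [hW]
  have ha2 : W.a₂ = (a ^ 2 - 1) ^ 2 / 4 - 1 - a ^ 2 := by rw [hW]
  have ha3 : W.a₃ = 0 := by rw [hW]
  have ha4 : W.a₄ = a ^ 2 := by rw [hW]
  have ha6 : W.a₆ = 0 := by rw [hW]
  have hP : W.Nonsingular 1 ((a ^ 2 - 1) / 2) := by
    apply (W.equation_iff_nonsingular_of_Δ_ne_zero hΔ).mp
    rw [Affine.equation_iff, ha1, ha2, ha3, ha4, ha6]; ring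
  have hQ : W.Nonsingular (a ^ 2) ((a ^ 2 - 1) * a ^ 2 / 2) := by
    apply (W.equation_iff_nonsingular_of_Δ_ne_zero hΔ).mp
    rw [Affine.equation_iff, ha1, ha2, ha3, ha4, ha6]; ring
  have h00 : W.Nonsingular 0 0 := by
    apply (W.equation_iff_nonsingular_of_Δ_ne_zero hΔ).mp
    rw [Affine.equation_iff, ha1, ha2, ha3, ha4, ha6]; ring
  have hyP : ((a ^ 2 - 1) / 2 : ℝ) ≠ W.negY 1 ((a ^ 2 - 1) / 2) := by
    rw [Affine.negY, ha1, ha3]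
    intro h; apply hc0; linarith
  have hyQ : ((a ^ 2 - 1) * a ^ 2 / 2 : ℝ) ≠ W.negY (a ^ 2) ((a ^ 2 - 1) * a ^ 2 / 2) := by
    rw [Affine.negY, ha1, ha3]
    intro h
    have h2 : (a ^ 2 - 1) * a ^ 2 = 0 := by linarith
    rcases mul_eq_zero.mp h2 with h' | h'
    · exact hc0 h'
    · exact ha0 (pow_eq_zero_iff two_ne_zero |>.mp h')
  have hPneg : W.Nonsingular 1 (-((a ^ 2 - 1) / 2)) := by
    apply (W.equation_iff_nonsingular_of_Δ_ne_zero hΔ).mp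
    rw [Affine.equation_iff, ha1, ha2, ha3, ha4, ha6]; ring
  have hsP : W.slope 1 1 ((a ^ 2 - 1) / 2) ((a ^ 2 - 1) / 2) = (a ^ 2 - 3) / 2 := by
    rw [Affine.slope_of_Y_ne rfl hyP, Affine.negY, ha1, ha2, ha3, ha4]
    rw [div_eq_iff (by intro h; apply hc0; linarith)]
    ring
  have h2P : Affine.Point.some _ _ hP + Affine.Point.some _ _ hP = Affine.Point.some _ _ hPneg := by
    rw [Affine.Point.add_self_of_Y_ne hyP]
    apply some_eq_some_aux
    · rw [Affine.addX, hsP, ha1, ha2]; ring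
    · rw [Affine.addY, Affine.negAddY, Affine.addX, Affine.negY, hsP, ha1, ha2, ha3]; ring
  have h3P : 3 • Affine.Point.some _ _ hP = 0 := by
    rw [show (3 : ℕ) = 2 + 1 from rfl, add_nsmul, two_nsmul, one_nsmul, h2P]
    exact Affine.Point.add_of_Y_eq rfl (by rw [Affine.negY, ha1, ha3]; ring)
  have hca2 : (a ^ 2 - 1) * a ^ 2 ≠ 0 := mul_ne_zero hc0 (pow_ne_zero 2 ha0)
  have hsQ : W.slope (a ^ 2) (a ^ 2) ((a ^ 2 - 1) * a ^ 2 / 2) ((a ^ 2 - 1) * a ^ 2 / 2) =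
      (a ^ 2 + 1) / 2 := by
    rw [Affine.slope_of_Y_ne rfl hyQ, Affine.negY, ha1, ha2, ha3, ha4]
    rw [div_eq_iff (by intro h; apply hca2; linarith)]
    ring
  have h2Q : Affine.Point.some _ _ hQ + Affine.Point.some _ _ hQ = Affine.Point.some _ _ hP := by
    rw [Affine.Point.add_self_of_Y_ne hyQ]
    apply some_eq_some_aux
    · rw [Affine.addX, hsQ, ha1, ha2]; ring
    · rw [Affine.addY, Affine.negAddY, Affine.addX, Affine.negY, hsQ, ha1, ha2, ha3]; ring
  have hx : (1 : ℝ) ≠ a ^ 2 := Ne.symm ha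
  have hsPQ : W.slope 1 (a ^ 2) ((a ^ 2 - 1) / 2) ((a ^ 2 - 1) * a ^ 2 / 2) =
      (a ^ 2 - 1) / 2 := by
    rw [Affine.slope_of_X_ne hx]
    rw [div_eq_iff (sub_ne_zero.mpr hx)]
    ring
  have h3Q : 3 • Affine.Point.some _ _ hQ = Affine.Point.some _ _ h00 := by
    rw [show (3 : ℕ) = 2 + 1 from rfl, add_nsmul, two_nsmul, one_nsmul, h2Q,
      Affine.Point.add_of_X_ne hx]
    apply some_eq_some_aux
    · rw [Affine.addX, hsPQ, ha1, ha2]; ring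
    · rw [Affine.addY, Affine.negAddY, Affine.addX, Affine.negY, hsPQ, ha1, ha2, ha3]; ring
  haveI : Fact (Nat.Prime 3) := ⟨by norm_num⟩
  exact ⟨hP, hQ, h00, h3P, h3Q,
    addOrderOf_eq_prime h3P (Affine.Point.some_ne_zero hP)⟩
end

section
/- Let a > 1 be real. Suppose X, Y ∈ ℝ satisfy Y² = X(X − 2a²/(a² + 1))(X − (a² + 1)/2) and (a² + 1)X ≠ 2a². Define X' = 2(a² + 1)Y² / ((a² + 1)X − 2a²)² and Y' = (2^{3/2}/(a² + 1)^{3/2}) · Y · (1 + a²(a² − 1)² / ((a² + 1)X − 2a²)²). Then Y'² = X'(X'² + (2(a⁴ − 6a² + 1)/(a² + 1)²)·X' + 1). -/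
/-- The degree-2 isogeny `φ` of Section 5 is well-defined: for real `a > 1`, if `(X, Y)` lies
on `Y² = X(X − 2a²/(a²+1))(X − (a²+1)/2)` and `(a²+1)X ≠ 2a²`, then the image point
`(X', Y')` lies on `Y'² = X'(X'² + (2(a⁴−6a²+1)/(a²+1)²)X' + 1)`. -/
theorem isogeny_well_defined (a X Y : ℝ) (ha : 1 < a)
    (hXY : Y ^ 2 = X * (X - 2 * a ^ 2 / (a ^ 2 + 1)) * (X - (a ^ 2 + 1) / 2))
    (hden : (a ^ 2 + 1) * X ≠ 2 * a ^ 2) :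
    let X' := 2 * (a ^ 2 + 1) * Y ^ 2 / ((a ^ 2 + 1) * X - 2 * a ^ 2) ^ 2
    let Y' := 2 ^ ((3:ℝ) / 2) / (a ^ 2 + 1) ^ ((3:ℝ) / 2) * Y *
      (1 + a ^ 2 * (a ^ 2 - 1) ^ 2 / ((a ^ 2 + 1) * X - 2 * a ^ 2) ^ 2)
    Y' ^ 2 = X' * (X' ^ 2 + 2 * (a ^ 4 - 6 * a ^ 2 + 1) / (a ^ 2 + 1) ^ 2 * X' + 1) := by
  intro X' Y'
  have hs : (0:ℝ) < a ^ 2 + 1 := by positivity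
  have hs' : (a:ℝ) ^ 2 + 1 ≠ 0 := ne_of_gt hs
  have hd : ((a ^ 2 + 1) * X - 2 * a ^ 2) ≠ 0 := sub_ne_zero.mpr hden
  have h2 : ((2:ℝ) ^ ((3:ℝ) / 2)) ^ 2 = 8 := by
    rw [← Real.rpow_natCast ((2:ℝ) ^ ((3:ℝ) / 2)) 2, ← Real.rpow_mul (by norm_num)]
    norm_num
  have h3 : (((a:ℝ) ^ 2 + 1) ^ ((3:ℝ) / 2)) ^ 2 = (a ^ 2 + 1) ^ 3 := by
    rw [← Real.rpow_natCast ((a ^ 2 + 1 : ℝ) ^ ((3:ℝ) / 2)) 2, ← Real.rpow_mul hs.le]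
    norm_num
  show (2 ^ ((3:ℝ) / 2) / (a ^ 2 + 1) ^ ((3:ℝ) / 2) * Y *
      (1 + a ^ 2 * (a ^ 2 - 1) ^ 2 / ((a ^ 2 + 1) * X - 2 * a ^ 2) ^ 2)) ^ 2 = _
  rw [mul_pow, mul_pow, div_pow, h2, h3, hXY]
  simp only [X']
  rw [hXY]
  have hd' : (a ^ 2 + 1) * X - a ^ 2 * 2 ≠ 0 := by rw [mul_comm (a ^ 2) 2]; exact hd
  field_simp
  ring
end

section
/- The function s ↦ −24·(−1 + 3·3^{−s} + 49·7^{−s} − 147·21^{−s})·ζ(s − 1)·ζ(s), defined for complex s ≠ 2 near 2 (where ζ is the Riemann zeta function), tends to (8π²/3)·log 7 as s → 2 with s ≠ 2. -/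
open Real Complex Filter Topology

noncomputable def fAux : ℂ → ℂ := fun s =>
  -24 * (-1 + 3 * (3 : ℂ) ^ (-s) + 49 * (7 : ℂ) ^ (-s) - 147 * (21 : ℂ) ^ (-s))

lemma cpow_neg_two (c : ℂ) : c ^ (-(2:ℂ)) = (c^2)⁻¹ := by
  rw [Complex.cpow_neg, show ((2:ℂ)) = ((2:ℕ):ℂ) by norm_num, Complex.cpow_natCast]

lemma fAux_two : fAux 2 = 0 := by
  simp only [fAux, cpow_neg_two]
  norm_num

lemma fAux_deriv : HasDerivAt fAux ((16 * Real.log 7 : ℝ) : ℂ) 2 := by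
  have hd : ∀ c : ℂ, c ≠ 0 → HasDerivAt (fun s : ℂ => c ^ (-s))
      (-(c ^ (-(2:ℂ)) * Complex.log c)) 2 := by
    intro c hc
    have := (hasDerivAt_neg (2:ℂ)).const_cpow (c := c) (Or.inl hc)
    simpa using this
  have h3 := ((hd 3 (by norm_num)).const_mul 3)
  have h7 := ((hd 7 (by norm_num)).const_mul 49)
  have h21 := ((hd 21 (by norm_num)).const_mul 147)
  have h := ((((hasDerivAt_const (2:ℂ) (-1:ℂ)).add h3).add h7).sub h21).const_mul (-24 : ℂ)
  refine h.congr_deriv ?_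
  have e3 : ((3:ℂ)^(-(2:ℂ))) = (9:ℂ)⁻¹ := by rw [cpow_neg_two]; norm_num
  have e7 : ((7:ℂ)^(-(2:ℂ))) = (49:ℂ)⁻¹ := by rw [cpow_neg_two]; norm_num
  have e21 : ((21:ℂ)^(-(2:ℂ))) = (441:ℂ)⁻¹ := by rw [cpow_neg_two]; norm_num
  have l3 : Complex.log 3 = (Real.log 3 : ℂ) := by
    rw [Complex.ofReal_log (by norm_num)]; norm_num
  have l7 : Complex.log 7 = (Real.log 7 : ℂ) := by
    rw [Complex.ofReal_log (by norm_num)]; norm_num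
  have l21 : Complex.log 21 = (Real.log 3 : ℂ) + (Real.log 7 : ℂ) := by
    rw [show (21:ℂ) = (21:ℝ) by norm_num, ← Complex.ofReal_log (by norm_num),
      show (21:ℝ) = 3 * 7 by norm_num, Real.log_mul (by norm_num) (by norm_num)]
    push_cast; ring
  rw [e3, e7, e21, l3, l7, l21]
  push_cast
  ring

/-- The evaluation `L(g, 2) = (8π²/3) log 7` in the proof of Lemma 9 (`lem38log7`): the
function `s ↦ −24(−1 + 3·3^{−s} + 49·7^{−s} − 147·21^{−s})ζ(s−1)ζ(s)` tends to
`(8π²/3) log 7` as `s → 2`, `s ≠ 2`. -/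
theorem L_g_at_two :
    Tendsto (fun s : ℂ =>
        -24 * (-1 + 3 * (3 : ℂ) ^ (-s) + 49 * (7 : ℂ) ^ (-s) - 147 * (21 : ℂ) ^ (-s)) *
          riemannZeta (s - 1) * riemannZeta s)
      (nhdsWithin 2 {(2 : ℂ)}ᶜ)
      (nhds ((8 * π ^ 2 / 3 * Real.log 7 : ℝ) : ℂ)) := by
  have T1 : Tendsto (fun s : ℂ => fAux s / (s - 2)) (𝓝[≠] 2)
      (𝓝 ((16 * Real.log 7 : ℝ) : ℂ)) := by
    have := hasDerivAt_iff_tendsto_slope.mp fAux_deriv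
    refine this.congr fun s => ?_
    simp [slope_def_field, fAux_two, div_eq_div_iff]
  have T2 : Tendsto (fun s : ℂ => (s - 2) * riemannZeta (s - 1)) (𝓝[≠] 2) (𝓝 1) := by
    have hmap : Tendsto (fun s : ℂ => s - 1) (𝓝[≠] (2:ℂ)) (𝓝[≠] (1:ℂ)) := by
      refine Tendsto.inf ?_ ?_
      · have h : Tendsto (fun s : ℂ => s - 1) (𝓝 2) (𝓝 (2 - 1)) :=
          (continuous_id.sub continuous_const).tendsto 2
        norm_num at h
        exact h
      · refine tendsto_principal_principal.mpr fun s hs => ?_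
        simp only [Set.mem_compl_iff, Set.mem_singleton_iff] at hs ⊢
        exact fun h => hs (by linear_combination h)
    have := riemannZeta_residue_one.comp hmap
    refine this.congr fun s => ?_
    simp only [Function.comp]
    ring_nf
  have T3 : Tendsto (fun s : ℂ => riemannZeta s) (𝓝[≠] 2) (𝓝 (riemannZeta 2)) :=
    ((differentiableAt_riemannZeta (by norm_num)).continuousAt.tendsto).mono_left
      nhdsWithin_le_nhds
  have := (T1.mul T2).mul T3
  rw [riemannZeta_two] at this
  have heq : ((16 * Real.log 7 : ℝ) : ℂ) * 1 * ((π:ℂ)^2/6)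
      = ((8 * π ^ 2 / 3 * Real.log 7 : ℝ) : ℂ) := by push_cast; ring
  rw [heq] at this
  refine this.congr' ?_
  filter_upwards [self_mem_nhdsWithin] with s hs
  have h2 : s - 2 ≠ 0 := sub_ne_zero.mpr hs
  field_simp [fAux]
  simp only [fAux]
  ring
end
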